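/- arXiv:2603.10386 — 6 statements merged into one kernel-verified Lean document; each statement's English description precedes it below -/
import Mathlib

section
/- Under the hypotheses of the hyperelliptic u_g-flow, the branch α_a of the function al_a satisfies ∂_s α_a = ψ_a · α_a on U. -/
open Finset

noncomputable def alFd (g : ℕ) (x : Fin g → ℂ → ℂ) (i : Fin g) (p : ℂ) : ℂ :=
  ∏ j ∈ Finset.univ.erase i, (x i p - x j p)

noncomputable def alPsi (g : ℕ) (x y : Fin g → ℂ → ℂ) (ba : ℂ) (p : ℂ) : ℂ :=
  ∑ i : Fin g, y i p / (alFd g x i p * (x i p - ba))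

theorem stmt2
    (g : ℕ) (hg : 1 ≤ g)
    (b : Fin (2 * g + 1) → ℂ) (hb : Function.Injective b)
    (U : Set ℂ) (hU : IsOpen U) (hUne : U.Nonempty)
    (x y : Fin g → ℂ → ℂ)
    (hx : ∀ i, DifferentiableOn ℂ (x i) U)
    (hy : ∀ i, DifferentiableOn ℂ (y i) U)
    (hdist : ∀ p ∈ U, ∀ i j, i ≠ j → x i p ≠ x j p)
    (hy2 : ∀ p ∈ U, ∀ i, (y i p) ^ 2 = ∏ j, (x i p - b j))
    (hyne : ∀ p ∈ U, ∀ i, y i p ≠ 0)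
    (hflow : ∀ p ∈ U, ∀ i, deriv (x i) p = 2 * y i p / alFd g x i p)
    (a : Fin (2 * g + 1))
    (hxa : ∀ p ∈ U, ∀ i, x i p ≠ b a)
    (α : ℂ → ℂ) (hα : DifferentiableOn ℂ α U)
    (hαne : ∀ p ∈ U, α p ≠ 0)
    (hα2 : ∀ p ∈ U, (α p) ^ 2 = ∏ i : Fin g, (x i p - b a))
 :
    ∀ p ∈ U, deriv α p = alPsi g x y (b a) p * α p := by
  intro p hp
  have hmem : U ∈ nhds p := hU.mem_nhds hp
  have hαd : DifferentiableAt ℂ α p := (hα p hp).differentiableAt hmem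
  have hxd : ∀ i : Fin g, DifferentiableAt ℂ (x i) p :=
    fun i => ((hx i) p hp).differentiableAt hmem
  -- deriv of LHS
  have hL : deriv (fun q => (α q) ^ 2) p = 2 * α p * deriv α p := by
    rw [deriv_fun_pow hαd 2]; ring
  have hR : deriv (fun q => ∏ i : Fin g, (x i q - b a)) p
      = ∑ i : Fin g, (∏ j ∈ Finset.univ.erase i, (x j p - b a)) * deriv (x i) p := by
    have := deriv_fun_finsetProd (u := (Finset.univ : Finset (Fin g)))
      (f := fun i q => x i q - b a) (x := p)
      (fun i _ => (hxd i).sub_const (b a))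
    simp only [smul_eq_mul] at this
    rw [this]
    congr 1; funext i
    congr 1
    rw [deriv_sub_const]
  -- equality of derivatives of eventually equal functions
  have heq : deriv (fun q => (α q) ^ 2) p
      = deriv (fun q => ∏ i : Fin g, (x i q - b a)) p := by
    apply Filter.EventuallyEq.deriv_eq
    filter_upwards [hmem] with q hq using hα2 q hq
  have key : 2 * α p * deriv α p
      = ∑ i : Fin g, (∏ j ∈ Finset.univ.erase i, (x j p - b a)) * deriv (x i) p := by
    rw [← hL, heq, hR]
  -- nonvanishing facts
  have hFd : ∀ i : Fin g, alFd g x i p ≠ 0 := by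
    intro i
    refine Finset.prod_ne_zero_iff.2 ?_
    intro j hj
    exact sub_ne_zero_of_ne (hdist p hp i j (fun h => (Finset.mem_erase.1 hj).1 h.symm))
  have hxba : ∀ i : Fin g, x i p - b a ≠ 0 := fun i => sub_ne_zero_of_ne (hxa p hp i)
  -- rewrite RHS using flow and prod over erase
  have key2 : 2 * α p * deriv α p = 2 * alPsi g x y (b a) p * (α p) ^ 2 := by
    rw [key, hα2 p hp, alPsi, mul_assoc, Finset.sum_mul, Finset.mul_sum]
    refine Finset.sum_congr rfl fun i _ => ?_
    rw [hflow p hp i]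
    have hprod : ∏ j : Fin g, (x j p - b a)
        = (x i p - b a) * ∏ j ∈ Finset.univ.erase i, (x j p - b a) := by
      rw [← Finset.mul_prod_erase Finset.univ _ (Finset.mem_univ i)]
    rw [hprod]
    field_simp [hFd i, hxba i]
  have h2α : (2 : ℂ) * α p ≠ 0 := mul_ne_zero two_ne_zero (hαne p hp)
  apply mul_left_cancel₀ h2α
  rw [key2]; ring
end

section
/- (Miura transformation, Theorem 4.6(2)) Under the hypotheses of the hyperelliptic u_g-flow, for every index a with x_i ≠ b_a on U one has ∂_s ψ_a + ψ_a^2 = 2 (x_1 + x_2 + ⋯ + x_g) + λ_{2g} + b_a on U. -/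
open Finset

section Hidden
open Polynomial Finset
open Polynomial Finset

lemma polyDerivProd {R : Type*} [CommRing R] {ι : Type*} [DecidableEq ι] (s : Finset ι) (f : ι → R[X]) :
    derivative (∏ i ∈ s, f i) = ∑ i ∈ s, (∏ j ∈ s.erase i, f j) * derivative (f i) := by
  induction s using Finset.induction with
  | empty => simp
  | insert a s hi ih =>
    have hcongr : ∀ i ∈ s, (∏ j ∈ (insert a s).erase i, f j) * derivative (f i)
        = f a * ((∏ j ∈ s.erase i, f j) * derivative (f i)) := by
      intro i his
      rw [Finset.erase_insert_of_ne (by rintro rfl; exact hi his), Finset.prod_insert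
        (fun h => hi (Finset.mem_of_mem_erase h))]
      ring
    rw [Finset.prod_insert hi, derivative_mul, Finset.sum_insert hi, Finset.erase_insert hi, ih,
      Finset.mul_sum, Finset.sum_congr rfl hcongr]
    ring

lemma sq_dvd_of_root_root_deriv {p : ℂ[X]} {a : ℂ} (h1 : p.eval a = 0)
    (h2 : (derivative p).eval a = 0) : (X - C a) ^ 2 ∣ p := by
  obtain ⟨q, hq⟩ := (dvd_iff_isRoot.mpr h1)
  have hq' : (derivative p) = q + (X - C a) * derivative q := by
    rw [hq, derivative_mul]; simp
  have hqa : q.eval a = 0 := by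
    have := h2; rw [hq'] at this; simpa using this
  obtain ⟨r, hr⟩ := (dvd_iff_isRoot.mpr hqa)
  exact ⟨r, by rw [hq, hr]; ring⟩

lemma residue_sum (g : ℕ) (hg : 1 ≤ g) (t : Fin g → ℂ) (ht : Function.Injective t)
    (h : ℂ[X]) (hmon : h.Monic) (hdeg : h.natDegree = 2 * g) :
    ∑ i : Fin g, (eval (t i) (derivative h)
        - 2 * eval (t i) h * ∑ j ∈ univ.erase i, (t i - t j)⁻¹)
        / (∏ j ∈ univ.erase i, (t i - t j)) ^ 2
      = h.nextCoeff + 2 * ∑ i : Fin g, t i := by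
  classical
  set F : ℂ[X] := ∏ i : Fin g, (X - C (t i)) with hF
  set G : Fin g → ℂ[X] := fun i => ∏ j ∈ univ.erase i, (X - C (t j)) with hG
  set Fd : Fin g → ℂ := fun i => ∏ j ∈ univ.erase i, (t i - t j) with hFd
  set sg : Fin g → ℂ := fun i => ∑ j ∈ univ.erase i, (t i - t j)⁻¹ with hsg
  set B : Fin g → ℂ := fun i => eval (t i) h / (Fd i) ^ 2 with hB
  set A : Fin g → ℂ :=
    fun i => (eval (t i) (derivative h) - 2 * eval (t i) h * sg i) / (Fd i) ^ 2 with hA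
  set S : ℂ[X] := ∑ i : Fin g, (C (A i) * (X - C (t i)) + C (B i)) * (G i) ^ 2 with hS
  have htij : ∀ i j : Fin g, j ≠ i → t i - t j ≠ 0 := fun i j hij =>
    sub_ne_zero.mpr (fun e => hij (ht e.symm))
  have hFd0 : ∀ i, Fd i ≠ 0 := by
    intro i
    exact Finset.prod_ne_zero_iff.mpr (fun j hj => htij i j (Finset.ne_of_mem_erase hj))
  have hGe : ∀ i, eval (t i) (G i) = Fd i := by
    intro i; simp [hG, hFd, eval_prod]
  have hGe0 : ∀ i j : Fin g, j ≠ i → eval (t i) (G j) = 0 := by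
    intro i j hji
    rw [hG, eval_prod]
    exact Finset.prod_eq_zero (Finset.mem_erase.mpr ⟨hji.symm, Finset.mem_univ i⟩) (by simp)
  have hFdsplit : ∀ i j, j ∈ (univ : Finset (Fin g)).erase i →
      Fd i = (t i - t j) * ∏ k ∈ ((univ : Finset (Fin g)).erase i).erase j, (t i - t k) :=
    fun i j hj => (Finset.mul_prod_erase _ _ hj).symm
  have hGd : ∀ i, eval (t i) (derivative (G i)) = Fd i * sg i := by
    intro i
    rw [hG, polyDerivProd, eval_finset_sum]
    rw [hsg, Finset.mul_sum]
    apply Finset.sum_congr rfl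
    intro j hj
    have : eval (t i) ((∏ k ∈ (univ.erase i).erase j, (X - C (t k)))
        * derivative (X - C (t j))) = ∏ k ∈ (univ.erase i).erase j, (t i - t k) := by
      simp [eval_prod]
    rw [this]
    field_simp [htij i j (Finset.ne_of_mem_erase hj)]
    rw [mul_comm]
    exact (hFdsplit i j hj).symm
  have hFe : ∀ i, eval (t i) F = 0 := by
    intro i
    rw [hF, eval_prod]
    exact Finset.prod_eq_zero (Finset.mem_univ i) (by simp)
  -- evaluation of S
  have hSe : ∀ i, eval (t i) S = eval (t i) h := by
    intro i
    rw [hS, eval_finset_sum]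
    rw [Finset.sum_eq_single i]
    · simp only [eval_mul, eval_add, eval_sub, eval_X, eval_C, eval_pow, hGe i, hB]
      field_simp [hFd0 i]
      simp
    · intro j _ hji
      simp [hGe0 i j hji]
    · intro hnot; exact absurd (Finset.mem_univ i) hnot
  -- evaluation of derivative of S
  have hSd : ∀ i, eval (t i) (derivative S) = eval (t i) (derivative h) := by
    intro i
    rw [hS, derivative_sum, eval_finset_sum]
    rw [Finset.sum_eq_single i]
    · rw [derivative_mul, derivative_pow]
      simp only [derivative_add, derivative_mul, derivative_sub, derivative_X, derivative_C,
        eval_add, eval_mul, eval_sub, eval_X, eval_C, eval_pow]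
      rw [hGe i, hGd i]
      simp only [hA, hB]
      field_simp [hFd0 i]
      simp only [eval_zero, eval_one]
      ring
    · intro j _ hji
      rw [derivative_mul, derivative_pow]
      simp [hGe0 i j hji]
    · intro hnot; exact absurd (Finset.mem_univ i) hnot
  -- P and its double roots
  set P : ℂ[X] := h - F ^ 2 - S with hP
  have hProot : ∀ i, eval (t i) P = 0 := by
    intro i; simp [hP, hFe i, hSe i]
  have hPdroot : ∀ i, eval (t i) (derivative P) = 0 := by
    intro i
    simp only [hP, derivative_sub, derivative_pow, eval_sub, eval_mul, eval_pow]
    rw [hSd i]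
    simp [hFe i]
  have hdvd : F ^ 2 ∣ P := by
    rw [hF, ← Finset.prod_pow]
    apply Finset.prod_dvd_of_coprime
    · intro i _ j _ hij
      exact ((pairwise_coprime_X_sub_C ht hij).pow)
    · intro i _
      exact sq_dvd_of_root_root_deriv (hProot i) (hPdroot i)
  -- degrees
  have hFmon : F.Monic := monic_prod_of_monic _ _ (fun i _ => monic_X_sub_C _)
  have hFdeg : F.natDegree = g := by
    rw [hF, natDegree_prod_of_monic _ _ (fun i _ => monic_X_sub_C _)]
    simp
  have hGmon : ∀ i, (G i).Monic := fun i => monic_prod_of_monic _ _ (fun j _ => monic_X_sub_C _)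
  have hGdeg : ∀ i, (G i).natDegree = g - 1 := by
    intro i
    rw [hG, natDegree_prod_of_monic _ _ (fun j _ => monic_X_sub_C _)]
    simp [Finset.card_erase_of_mem]
  have hF2mon : (F ^ 2).Monic := hFmon.pow 2
  have hF2deg : (F ^ 2).natDegree = 2 * g := by
    rw [natDegree_pow, hFdeg, mul_comm]
  have hSdeg : S.natDegree ≤ 2 * g - 1 := by
    apply Polynomial.natDegree_sum_le_of_forall_le
    intro i _
    refine le_trans (natDegree_mul_le) ?_
    have h1 : (C (A i) * (X - C (t i)) + C (B i)).natDegree ≤ 1 := by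
      refine le_trans (natDegree_add_le _ _) ?_
      simp only [natDegree_C, max_le_iff]
      constructor
      · exact le_trans (natDegree_mul_le) (by simp [natDegree_X_sub_C])
      · omega
    have h2 : ((G i) ^ 2).natDegree ≤ 2 * g - 2 := by
      rw [natDegree_pow, hGdeg i]; omega
    omega
  have hPdeg : P.degree < (F ^ 2).degree := by
    have hd1 : (h - F ^ 2).degree < (F ^ 2).degree := by
      have : h.degree = (F ^ 2).degree := by
        rw [degree_eq_natDegree hmon.ne_zero, degree_eq_natDegree hF2mon.ne_zero, hdeg, hF2deg]
      rw [← this]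
      exact degree_sub_lt this hmon.ne_zero (by rw [hmon.leadingCoeff, hF2mon.leadingCoeff])
    have hd2 : S.degree < (F ^ 2).degree := by
      refine lt_of_le_of_lt (degree_le_natDegree) ?_
      rw [degree_eq_natDegree hF2mon.ne_zero, hF2deg]
      exact_mod_cast (show S.natDegree < 2 * g by omega)
    calc P.degree = ((h - F ^ 2) - S).degree := by rw [hP]
    _ ≤ max (h - F ^ 2).degree S.degree := degree_sub_le _ _
    _ < (F ^ 2).degree := max_lt hd1 hd2
  have hP0 : P = 0 := by
    by_contra hne
    exact absurd (degree_le_of_dvd hdvd hne) (not_le.mpr hPdeg)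
  have hkey : h = F ^ 2 + S := by
    have : h - F ^ 2 - S = 0 := hP0
    linear_combination this
  -- coefficient extraction at 2*g - 1
  have hcoefh : h.coeff (2 * g - 1) = h.nextCoeff := by
    rw [nextCoeff_of_natDegree_pos (by omega), hdeg]
  have hcoefF2 : (F ^ 2).coeff (2 * g - 1) = -(2 * ∑ i : Fin g, t i) := by
    have : (F ^ 2).coeff (2 * g - 1) = (F ^ 2).nextCoeff := by
      rw [nextCoeff_of_natDegree_pos (by omega), hF2deg]
    rw [this, pow_two, hFmon.nextCoeff_mul hFmon, hF, prod_X_sub_C_nextCoeff]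
    ring
  have hcoefS : S.coeff (2 * g - 1) = ∑ i : Fin g, A i := by
    rw [hS, finset_sum_coeff]
    apply Finset.sum_congr rfl
    intro i _
    have hXG : ((X - C (t i)) * (G i) ^ 2).Monic := (monic_X_sub_C _).mul ((hGmon i).pow 2)
    have hXGdeg : ((X - C (t i)) * (G i) ^ 2).natDegree = 2 * g - 1 := by
      rw [(monic_X_sub_C _).natDegree_mul ((hGmon i).pow 2), natDegree_X_sub_C, natDegree_pow,
        hGdeg i]
      omega
    have e1 : (C (A i) * (X - C (t i)) + C (B i)) * (G i) ^ 2
        = C (A i) * ((X - C (t i)) * (G i) ^ 2) + C (B i) * (G i) ^ 2 := by ring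
    have hz : ((G i) ^ 2).coeff (2 * g - 1) = 0 := by
      apply coeff_eq_zero_of_natDegree_lt
      rw [natDegree_pow, hGdeg i]; omega
    rw [e1, coeff_add, coeff_C_mul, coeff_C_mul, hz, ← hXGdeg, hXG.coeff_natDegree]
    ring
  have := congrArg (fun p : ℂ[X] => p.coeff (2 * g - 1)) hkey
  simp only [coeff_add] at this
  rw [hcoefh, hcoefF2, hcoefS] at this
  have hfin : ∑ i : Fin g, A i = h.nextCoeff + 2 * ∑ i : Fin g, t i := by
    linear_combination -this
  exact hfin


lemma diag_lemma (Yi u Hi H'i fPi Fdi : ℂ) (hFdi : Fdi ≠ 0) (hu : u ≠ 0) (hY : Yi ≠ 0)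
    (hY2 : Yi ^ 2 = u * Hi) (hfP : fPi = Hi + u * H'i) :
    2 * Yi / Fdi * fPi / (2 * Yi) * (Fdi * u) / (Fdi * u) ^ 2
      - Yi * (Fdi * (2 * Yi / Fdi)) / (Fdi * u) ^ 2
      = H'i / Fdi ^ 2 - (Yi / (Fdi * u)) ^ 2 := by
  have hHi : Hi = Yi ^ 2 / u := (eq_div_iff hu).mpr (by linear_combination -hY2)
  subst hfP hHi
  have h1 : (Fdi * u) ^ 2 ≠ 0 := pow_ne_zero 2 (mul_ne_zero hFdi hu)
  have h2 : Fdi ^ 2 ≠ 0 := pow_ne_zero 2 hFdi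
  rw [div_sub_div_same, div_pow, div_sub_div _ _ h2 h1,
    div_eq_div_iff h1 (mul_ne_zero h2 h1)]
  field_simp
  ring

lemma perj_lemma (Yi Yj u v pi Fdi Fdj Hi : ℂ) (hsplit : Fdi = v * pi)
    (hu : u ≠ 0) (hv : v ≠ 0) (hpi : pi ≠ 0) (hFdj : Fdj ≠ 0)
    (hY2 : Yi ^ 2 = u * Hi) :
    Yi * (pi * (2 * Yi / Fdi - 2 * Yj / Fdj)) * u / (Fdi * u) ^ 2
      = 2 * Hi * v⁻¹ / Fdi ^ 2
        + -(2 * Yi * Yj) / (v * Fdi * Fdj * u) := by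
  have hHi : Hi = Yi ^ 2 / u := (eq_div_iff hu).mpr (by linear_combination -hY2)
  subst hsplit hHi
  have hvp : v * pi ≠ 0 := mul_ne_zero hv hpi
  have h1 : (v * pi * u) ^ 2 ≠ 0 := pow_ne_zero 2 (mul_ne_zero hvp hu)
  have h2 : (v * pi) ^ 2 ≠ 0 := pow_ne_zero 2 hvp
  have h3 : v * (v * pi) * Fdj * u ≠ 0 :=
    mul_ne_zero (mul_ne_zero (mul_ne_zero hv hvp) hFdj) hu
  rw [div_add_div _ _ h2 h3, div_eq_div_iff h1 (mul_ne_zero h2 h3)]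
  field_simp
  ring

lemma cross_antisymm (Yi Yj u w v v' Fdi Fdj : ℂ) (hrel : v = u - w) (hrel' : v' = -v)
    (hv : v ≠ 0) (hFdi : Fdi ≠ 0) (hFdj : Fdj ≠ 0) (hu : u ≠ 0) (hw : w ≠ 0) :
    Yi / (Fdi * u) * (Yj / (Fdj * w))
      - -(2 * Yi * Yj) / (v * Fdi * Fdj * u)
      = -(Yj / (Fdj * w) * (Yi / (Fdi * u))
          - -(2 * Yj * Yi) / (v' * Fdj * Fdi * w)) := by
  subst hrel'
  have hd1 : Fdi * u * (Fdj * w) ≠ 0 :=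
    mul_ne_zero (mul_ne_zero hFdi hu) (mul_ne_zero hFdj hw)
  have hd2 : v * Fdi * Fdj * u ≠ 0 :=
    mul_ne_zero (mul_ne_zero (mul_ne_zero hv hFdi) hFdj) hu
  have hd3 : Fdj * w * (Fdi * u) ≠ 0 :=
    mul_ne_zero (mul_ne_zero hFdj hw) (mul_ne_zero hFdi hu)
  have hd4 : v * Fdj * Fdi * w ≠ 0 :=
    mul_ne_zero (mul_ne_zero (mul_ne_zero hv hFdj) hFdi) hw
  have e : -v * Fdj * Fdi * w = -(v * Fdj * Fdi * w) := by ring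
  rw [div_mul_div_comm, div_mul_div_comm, e, div_neg, sub_neg_eq_add, neg_add',
    div_sub_div _ _ hd1 hd2, ← neg_div, div_sub_div _ _ hd3 hd4,
    div_eq_div_iff (mul_ne_zero hd1 hd2) (mul_ne_zero hd3 hd4)]
  subst hrel
  ring



lemma sum_erase_antisymm {g : ℕ} (M : Fin g → Fin g → ℂ)
    (hM : ∀ i j, i ≠ j → M i j = - M j i) :
    ∑ i : Fin g, ∑ j ∈ univ.erase i, M i j = 0 := by
  classical
  have h1 : ∀ (N : Fin g → Fin g → ℂ), ∑ i : Fin g, ∑ j ∈ univ.erase i, N i j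
      = ∑ i : Fin g, ∑ j : Fin g, if j ≠ i then N i j else 0 := by
    intro N
    refine Finset.sum_congr rfl fun i _ => ?_
    rw [← Finset.filter_ne' univ i, Finset.sum_filter]
  have swap : ∀ N : Fin g → Fin g → ℂ,
      ∑ i : Fin g, ∑ j ∈ univ.erase i, N i j = ∑ i : Fin g, ∑ j ∈ univ.erase i, N j i := by
    intro N
    rw [h1 N, h1 (fun i j => N j i), Finset.sum_comm]
    refine Finset.sum_congr rfl fun i _ => Finset.sum_congr rfl fun j _ => ?_
    by_cases h : i = j
    · subst h; simp
    · simp [h, Ne.symm h]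
  have h2 : ∑ i : Fin g, ∑ j ∈ univ.erase i, M i j
      = -∑ i : Fin g, ∑ j ∈ univ.erase i, M i j := by
    nth_rewrite 1 [swap M]
    rw [← Finset.sum_neg_distrib]
    refine Finset.sum_congr rfl fun i _ => ?_
    rw [← Finset.sum_neg_distrib]
    refine Finset.sum_congr rfl fun j hj => ?_
    exact hM j i (Finset.ne_of_mem_erase hj)
  linear_combination ((1 : ℂ)/2) * h2


lemma pointwise (g : ℕ) (hg : 1 ≤ g) (b : Fin (2 * g + 1) → ℂ) (a : Fin (2 * g + 1))
    (T Y : Fin g → ℂ)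
    (hdist : ∀ i j, i ≠ j → T i ≠ T j)
    (hY2 : ∀ i, Y i ^ 2 = ∏ j, (T i - b j))
    (hYne : ∀ i, Y i ≠ 0)
    (hTb : ∀ i, T i ≠ b a)
    (Fd E fP Fd' Yd : Fin g → ℂ)
    (hFd : ∀ i, Fd i = ∏ j ∈ univ.erase i, (T i - T j))
    (hE : ∀ i, E i = 2 * Y i / Fd i)
    (hfP : ∀ i, fP i = ∑ j, ∏ k ∈ univ.erase j, (T i - b k))
    (hFd' : ∀ i, Fd' i = ∑ j ∈ univ.erase i,
        (∏ k ∈ (univ.erase i).erase j, (T i - T k)) * (E i - E j))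
    (hYd : ∀ i, Yd i = E i * fP i / (2 * Y i)) :
    ∑ i : Fin g, (Yd i * (Fd i * (T i - b a)) - Y i * (Fd' i * (T i - b a) + Fd i * E i))
        / (Fd i * (T i - b a)) ^ 2
      + (∑ i : Fin g, Y i / (Fd i * (T i - b a))) ^ 2
      = 2 * (∑ i : Fin g, T i) + (-(∑ j, b j)) + b a := by
  classical
  have hTc : ∀ i, T i - b a ≠ 0 := fun i => sub_ne_zero.mpr (hTb i)
  have hTT : ∀ i j : Fin g, j ≠ i → T i - T j ≠ 0 := fun i j hji =>
    sub_ne_zero.mpr (hdist i j hji.symm)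
  have hFd0 : ∀ i, Fd i ≠ 0 := fun i => by
    rw [hFd i]
    exact Finset.prod_ne_zero_iff.mpr fun j hj => hTT i j (Finset.ne_of_mem_erase hj)
  have hTinj : Function.Injective T := by
    intro i j he
    by_contra hne
    exact hdist i j hne he
  set h : ℂ[X] := ∏ k ∈ univ.erase a, (X - C (b k)) with hh
  have hmon : h.Monic := monic_prod_of_monic _ _ fun k _ => monic_X_sub_C _
  have hcard : ((univ : Finset (Fin (2 * g + 1))).erase a).card = 2 * g := by
    rw [Finset.card_erase_of_mem (mem_univ a), Finset.card_univ, Fintype.card_fin]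
    omega
  have hdeg : h.natDegree = 2 * g := by
    rw [hh, natDegree_prod_of_monic _ _ fun k _ => monic_X_sub_C _]
    simp [natDegree_X_sub_C, hcard]
  have hHval : ∀ i, eval (T i) h = ∏ k ∈ univ.erase a, (T i - b k) := by
    intro i; rw [hh]; simp [eval_prod]
  have hk1 : ∀ i, Y i ^ 2 = (T i - b a) * eval (T i) h := by
    intro i
    rw [hHval i, hY2 i, ← Finset.mul_prod_erase univ _ (mem_univ a)]
  have hH'val : ∀ i, eval (T i) (derivative h)
      = ∑ j ∈ univ.erase a, ∏ k ∈ (univ.erase a).erase j, (T i - b k) := by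
    intro i
    rw [hh, polyDerivProd, eval_finset_sum]
    refine Finset.sum_congr rfl fun j hj => ?_
    simp [eval_prod]
  have hk2 : ∀ i, fP i = eval (T i) h + (T i - b a) * eval (T i) (derivative h) := by
    intro i
    rw [hfP i, hH'val i, hHval i, ← Finset.add_sum_erase univ _ (mem_univ a), Finset.mul_sum]
    congr 1
    refine Finset.sum_congr rfl fun j hj => ?_
    have haj : a ∈ univ.erase j :=
      Finset.mem_erase.mpr ⟨(Finset.ne_of_mem_erase hj).symm, mem_univ a⟩
    rw [← Finset.mul_prod_erase (univ.erase j) _ haj, Finset.erase_right_comm]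
  have hDi : ∀ i, (Yd i * (Fd i * (T i - b a)) - Y i * (Fd' i * (T i - b a) + Fd i * E i))
        / (Fd i * (T i - b a)) ^ 2
      = (eval (T i) (derivative h)
          - 2 * eval (T i) h * ∑ j ∈ univ.erase i, (T i - T j)⁻¹) / (Fd i) ^ 2
        - (Y i / (Fd i * (T i - b a))) ^ 2
        - ∑ j ∈ univ.erase i, -(2 * Y i * Y j) / ((T i - T j) * Fd i * Fd j * (T i - b a)) := by
    intro i
    have e0 : (Yd i * (Fd i * (T i - b a)) - Y i * (Fd' i * (T i - b a) + Fd i * E i))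
        / (Fd i * (T i - b a)) ^ 2
        = (Yd i * (Fd i * (T i - b a)) / (Fd i * (T i - b a)) ^ 2
            - Y i * (Fd i * E i) / (Fd i * (T i - b a)) ^ 2)
          - Y i * Fd' i * (T i - b a) / (Fd i * (T i - b a)) ^ 2 := by ring
    have ediag : Yd i * (Fd i * (T i - b a)) / (Fd i * (T i - b a)) ^ 2
          - Y i * (Fd i * E i) / (Fd i * (T i - b a)) ^ 2
        = eval (T i) (derivative h) / Fd i ^ 2 - (Y i / (Fd i * (T i - b a))) ^ 2 := by
      rw [hYd i, hE i]
      exact diag_lemma (Y i) (T i - b a) (eval (T i) h) (eval (T i) (derivative h)) (fP i)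
        (Fd i) (hFd0 i) (hTc i) (hYne i) (hk1 i) (hk2 i)
    have ecross : Y i * Fd' i * (T i - b a) / (Fd i * (T i - b a)) ^ 2
        = 2 * eval (T i) h * (∑ j ∈ univ.erase i, (T i - T j)⁻¹) / Fd i ^ 2
          + ∑ j ∈ univ.erase i, -(2 * Y i * Y j)
              / ((T i - T j) * Fd i * Fd j * (T i - b a)) := by
      rw [hFd' i, Finset.mul_sum, Finset.sum_mul, Finset.sum_div]
      have eper : ∀ j ∈ univ.erase i,
          Y i * ((∏ k ∈ (univ.erase i).erase j, (T i - T k)) * (E i - E j)) * (T i - b a)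
            / (Fd i * (T i - b a)) ^ 2
          = 2 * eval (T i) h * (T i - T j)⁻¹ / Fd i ^ 2
            + -(2 * Y i * Y j) / ((T i - T j) * Fd i * Fd j * (T i - b a)) := by
        intro j hj
        have hsplit : Fd i = (T i - T j) * ∏ k ∈ (univ.erase i).erase j, (T i - T k) := by
          rw [hFd i, ← Finset.mul_prod_erase (univ.erase i) _ hj]
        have hpi : (∏ k ∈ (univ.erase i).erase j, (T i - T k)) ≠ 0 :=
          (mul_ne_zero_iff.mp (hsplit ▸ hFd0 i)).2
        rw [hE i, hE j]
        exact perj_lemma (Y i) (Y j) (T i - b a) (T i - T j) _ (Fd i) (Fd j) _ hsplit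
          (hTc i) (hTT i j (Finset.ne_of_mem_erase hj)) hpi (hFd0 j) (hk1 i)
      rw [Finset.sum_congr rfl eper, Finset.sum_add_distrib]
      congr 1
      rw [Finset.mul_sum, Finset.sum_div]
    rw [e0, ediag, ecross]
    ring
  have hsum : ∑ i : Fin g, (Yd i * (Fd i * (T i - b a))
        - Y i * (Fd' i * (T i - b a) + Fd i * E i)) / (Fd i * (T i - b a)) ^ 2
      = (∑ i : Fin g, (eval (T i) (derivative h)
            - 2 * eval (T i) h * ∑ j ∈ univ.erase i, (T i - T j)⁻¹) / (Fd i) ^ 2)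
        - (∑ i : Fin g, (Y i / (Fd i * (T i - b a))) ^ 2)
        - ∑ i : Fin g, ∑ j ∈ univ.erase i, -(2 * Y i * Y j)
            / ((T i - T j) * Fd i * Fd j * (T i - b a)) := by
    rw [Finset.sum_congr rfl fun i _ => hDi i, Finset.sum_sub_distrib, Finset.sum_sub_distrib]
  have hpsi : (∑ i : Fin g, Y i / (Fd i * (T i - b a))) ^ 2
      = (∑ i : Fin g, (Y i / (Fd i * (T i - b a))) ^ 2)
        + ∑ i : Fin g, ∑ j ∈ univ.erase i,
            Y i / (Fd i * (T i - b a)) * (Y j / (Fd j * (T j - b a))) := by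
    rw [pow_two, Finset.sum_mul_sum, ← Finset.sum_add_distrib]
    refine Finset.sum_congr rfl fun i _ => ?_
    rw [← Finset.add_sum_erase univ
      (fun j => Y i / (Fd i * (T i - b a)) * (Y j / (Fd j * (T j - b a)))) (mem_univ i), pow_two]
  have hM0 : ∑ i : Fin g, ∑ j ∈ univ.erase i,
      (Y i / (Fd i * (T i - b a)) * (Y j / (Fd j * (T j - b a)))
        - -(2 * Y i * Y j) / ((T i - T j) * Fd i * Fd j * (T i - b a))) = 0 := by
    apply sum_erase_antisymm
    intro i j hij
    exact cross_antisymm (Y i) (Y j) (T i - b a) (T j - b a) (T i - T j) (T j - T i)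
      (Fd i) (Fd j) (by ring) (by ring) (hTT i j hij.symm) (hFd0 i) (hFd0 j) (hTc i) (hTc j)
  have hMsplit : ∑ i : Fin g, ∑ j ∈ univ.erase i,
      (Y i / (Fd i * (T i - b a)) * (Y j / (Fd j * (T j - b a)))
        - -(2 * Y i * Y j) / ((T i - T j) * Fd i * Fd j * (T i - b a)))
      = (∑ i : Fin g, ∑ j ∈ univ.erase i,
          Y i / (Fd i * (T i - b a)) * (Y j / (Fd j * (T j - b a))))
        - ∑ i : Fin g, ∑ j ∈ univ.erase i, -(2 * Y i * Y j)
            / ((T i - T j) * Fd i * Fd j * (T i - b a)) := by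
    rw [← Finset.sum_sub_distrib]
    exact Finset.sum_congr rfl fun i _ => Finset.sum_sub_distrib _ _
  have h4 := residue_sum g hg T hTinj h hmon hdeg
  simp only [← hFd] at h4
  have h5 : h.nextCoeff = -((∑ j, b j) - b a) := by
    rw [hh, prod_X_sub_C_nextCoeff, Finset.sum_erase_eq_sub (mem_univ a)]
  rw [hsum, hpsi]
  rw [h5] at h4
  linear_combination h4 + hMsplit.symm + hM0

end Hidden

theorem stmt3
    (g : ℕ) (hg : 1 ≤ g)
    (b : Fin (2 * g + 1) → ℂ) (hb : Function.Injective b)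
    (U : Set ℂ) (hU : IsOpen U) (hUne : U.Nonempty)
    (x y : Fin g → ℂ → ℂ)
    (hx : ∀ i, DifferentiableOn ℂ (x i) U)
    (hy : ∀ i, DifferentiableOn ℂ (y i) U)
    (hdist : ∀ p ∈ U, ∀ i j, i ≠ j → x i p ≠ x j p)
    (hy2 : ∀ p ∈ U, ∀ i, (y i p) ^ 2 = ∏ j, (x i p - b j))
    (hyne : ∀ p ∈ U, ∀ i, y i p ≠ 0)
    (hflow : ∀ p ∈ U, ∀ i, deriv (x i) p = 2 * y i p / alFd g x i p)
 :
    ∀ a : Fin (2 * g + 1), (∀ p ∈ U, ∀ i, x i p ≠ b a) →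
      ∀ p ∈ U,
        deriv (alPsi g x y (b a)) p + (alPsi g x y (b a) p) ^ 2
          = 2 * (∑ i : Fin g, x i p) + (-(∑ j, b j)) + b a := by
  intro a hxa p hp
  classical
  have hpU : U ∈ nhds p := hU.mem_nhds hp
  set E : Fin g → ℂ := fun i => 2 * y i p / alFd g x i p with hE
  have hxd : ∀ i, HasDerivAt (x i) (E i) p := by
    intro i
    have h1 : HasDerivAt (x i) (deriv (x i) p) p :=
      ((hx i).differentiableAt hpU).hasDerivAt
    rwa [hflow p hp i] at h1
  have hFdD : ∀ i, HasDerivAt (alFd g x i)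
      (∑ j ∈ univ.erase i, (∏ k ∈ (univ.erase i).erase j, (x i p - x k p)) * (E i - E j)) p := by
    intro i
    have h1 := HasDerivAt.fun_finsetProd (u := univ.erase i) (f := fun j q => x i q - x j q)
      (f' := fun j => E i - E j) (fun j _ => (hxd i).sub (hxd j))
    simp only [smul_eq_mul] at h1
    have h2 : (∑ j ∈ univ.erase i, (∏ k ∈ (univ.erase i).erase j, (x i p - x k p)) * (E i - E j))
        = ∑ j ∈ univ.erase i, (∏ k ∈ (univ.erase i).erase j, (fun j q => x i q - x j q) k p) * (E i - E j) := rfl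
    rw [h2]
    exact h1
  have hyD : ∀ i, HasDerivAt (y i)
      (E i * (∑ j, ∏ k ∈ univ.erase j, (x i p - b k)) / (2 * y i p)) p := by
    intro i
    have hyd0 : HasDerivAt (y i) (deriv (y i) p) p :=
      ((hy i).differentiableAt hpU).hasDerivAt
    have hsq : HasDerivAt (fun q => (y i q) ^ 2) ((2 : ℕ) * y i p ^ 1 * deriv (y i) p) p :=
      hyd0.pow 2
    have hprod : HasDerivAt (fun q => ∏ j, (x i q - b j))
        (∑ j, (∏ k ∈ univ.erase j, (x i p - b k)) * E i) p := by
      have h1 := HasDerivAt.fun_finsetProd (u := univ) (f := fun j q => x i q - b j)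
        (f' := fun _ => E i) (fun j _ => (hxd i).sub_const (b j))
      simp only [smul_eq_mul] at h1
      exact h1
    have heq : (fun q => ∏ j, (x i q - b j)) =ᶠ[nhds p] (fun q => (y i q) ^ 2) := by
      filter_upwards [hpU] with q hq using (hy2 q hq i).symm
    have hsq' : HasDerivAt (fun q => ∏ j, (x i q - b j)) ((2 : ℕ) * y i p ^ 1 * deriv (y i) p) p :=
      hsq.congr_of_eventuallyEq heq
    have huniq : (2 : ℕ) * y i p ^ 1 * deriv (y i) p
        = ∑ j, (∏ k ∈ univ.erase j, (x i p - b k)) * E i := hsq'.unique hprod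
    have hsm : (∑ j, (∏ k ∈ univ.erase j, (x i p - b k)) * E i)
        = (∑ j, ∏ k ∈ univ.erase j, (x i p - b k)) * E i := by rw [Finset.sum_mul]
    have hd : deriv (y i) p = E i * (∑ j, ∏ k ∈ univ.erase j, (x i p - b k)) / (2 * y i p) := by
      rw [eq_div_iff (mul_ne_zero two_ne_zero (hyne p hp i))]
      push_cast at huniq
      linear_combination huniq + hsm
    rwa [hd] at hyd0
  have hdenD : ∀ i, HasDerivAt (fun q => alFd g x i q * (x i q - b a))
      ((∑ j ∈ univ.erase i, (∏ k ∈ (univ.erase i).erase j, (x i p - x k p)) * (E i - E j))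
          * (x i p - b a)
        + alFd g x i p * E i) p := fun i => (hFdD i).mul ((hxd i).sub_const (b a))
  have hden0 : ∀ i, alFd g x i p * (x i p - b a) ≠ 0 := by
    intro i
    apply mul_ne_zero
    · exact Finset.prod_ne_zero_iff.mpr fun j hj =>
        sub_ne_zero.mpr (hdist p hp i j (Finset.ne_of_mem_erase hj).symm)
    · exact sub_ne_zero.mpr (hxa p hp i)
  have hqD : ∀ i, HasDerivAt (fun q => y i q / (alFd g x i q * (x i q - b a)))
      ((E i * (∑ j, ∏ k ∈ univ.erase j, (x i p - b k)) / (2 * y i p)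
          * (alFd g x i p * (x i p - b a))
        - y i p * ((∑ j ∈ univ.erase i,
            (∏ k ∈ (univ.erase i).erase j, (x i p - x k p)) * (E i - E j)) * (x i p - b a)
          + alFd g x i p * E i))
        / (alFd g x i p * (x i p - b a)) ^ 2) p :=
    fun i => (hyD i).div (hdenD i) (hden0 i)
  have hpsiD : HasDerivAt (alPsi g x y (b a))
      (∑ i : Fin g, (E i * (∑ j, ∏ k ∈ univ.erase j, (x i p - b k)) / (2 * y i p)
          * (alFd g x i p * (x i p - b a))
        - y i p * ((∑ j ∈ univ.erase i,
            (∏ k ∈ (univ.erase i).erase j, (x i p - x k p)) * (E i - E j)) * (x i p - b a)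
          + alFd g x i p * E i))
        / (alFd g x i p * (x i p - b a)) ^ 2) p := by
    exact HasDerivAt.fun_sum (fun i _ => hqD i)
  rw [hpsiD.deriv]
  show _ + (∑ i : Fin g, y i p / (alFd g x i p * (x i p - b a))) ^ 2 = _
  exact pointwise g hg b a (fun i => x i p) (fun i => y i p) (hdist p hp) (hy2 p hp)
    (hyne p hp) (hxa p hp) (fun i => alFd g x i p) E
    (fun i => ∑ j, ∏ k ∈ univ.erase j, (x i p - b k))
    (fun i => ∑ j ∈ univ.erase i, (∏ k ∈ (univ.erase i).erase j, (x i p - x k p)) * (E i - E j))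
    (fun i => E i * (∑ j, ∏ k ∈ univ.erase j, (x i p - b k)) / (2 * y i p))
    (fun i => rfl) (fun i => rfl) (fun i => rfl) (fun i => rfl) (fun i => rfl)
end

section
/- (Proposition 5.2) Under the hypotheses of the hyperelliptic u_g-flow with the two branch indices a = 1, 2, one has ψ_2 − ψ_1 = (b_2 − b_1) · Σ_{r=1}^{g} y_r / ((b_1 − x_r)(b_2 − x_r) F′(x_r)) on U; consequently al_{12} = α_1 α_2 · Σ_{r=1}^{g} y_r / ((b_1 − x_r)(b_2 − x_r) F′(x_r)) = (1/(b_2 − b_1)) (α_1 ∂_s α_2 − α_2 ∂_s α_1). -/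
open Finset

noncomputable def al12 (g : ℕ) (x y : Fin g → ℂ → ℂ) (b1 b2 : ℂ) (α₁ α₂ : ℂ → ℂ)
    (p : ℂ) : ℂ :=
  ((alPsi g x y b2 p - alPsi g x y b1 p) / (b2 - b1)) * (α₁ p * α₂ p)

theorem stmt8
    (g : ℕ) (hg : 1 ≤ g)
    (b : Fin (2 * g + 1) → ℂ) (hb : Function.Injective b)
    (U : Set ℂ) (hU : IsOpen U) (hUne : U.Nonempty)
    (x y : Fin g → ℂ → ℂ)
    (hx : ∀ i, DifferentiableOn ℂ (x i) U)
    (hy : ∀ i, DifferentiableOn ℂ (y i) U)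
    (hdist : ∀ p ∈ U, ∀ i j, i ≠ j → x i p ≠ x j p)
    (hy2 : ∀ p ∈ U, ∀ i, (y i p) ^ 2 = ∏ j, (x i p - b j))
    (hyne : ∀ p ∈ U, ∀ i, y i p ≠ 0)
    (hflow : ∀ p ∈ U, ∀ i, deriv (x i) p = 2 * y i p / alFd g x i p)
    (hx1 : ∀ p ∈ U, ∀ i, x i p ≠ b 0)
    (hx2 : ∀ p ∈ U, ∀ i, x i p ≠ b 1)
    (α₁ α₂ : ℂ → ℂ)
    (hα₁ : DifferentiableOn ℂ α₁ U) (hα₂ : DifferentiableOn ℂ α₂ U)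
    (hα₁ne : ∀ p ∈ U, α₁ p ≠ 0) (hα₂ne : ∀ p ∈ U, α₂ p ≠ 0)
    (hα₁2 : ∀ p ∈ U, (α₁ p) ^ 2 = ∏ i : Fin g, (x i p - b 0))
    (hα₂2 : ∀ p ∈ U, (α₂ p) ^ 2 = ∏ i : Fin g, (x i p - b 1))
 :
    ∀ p ∈ U,
      (alPsi g x y (b 1) p - alPsi g x y (b 0) p
          = (b 1 - b 0) *
            ∑ r : Fin g, y r p / ((b 0 - x r p) * (b 1 - x r p) * alFd g x r p)) ∧
      al12 g x y (b 0) (b 1) α₁ α₂ p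
          = α₁ p * α₂ p *
            ∑ r : Fin g, y r p / ((b 0 - x r p) * (b 1 - x r p) * alFd g x r p) ∧
      al12 g x y (b 0) (b 1) α₁ α₂ p
          = (1 / (b 1 - b 0)) * (α₁ p * deriv α₂ p - α₂ p * deriv α₁ p) := by
  have h01 : (0 : Fin (2 * g + 1)) ≠ 1 := by
    have h3 : 2 ≤ 2 * g + 1 := by omega
    simp [Fin.ext_iff, Nat.mod_eq_of_lt (by omega : 1 < 2 * g + 1)]
  have hΔ : b 1 - b 0 ≠ 0 := sub_ne_zero.mpr fun h => h01 (hb h.symm)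
  intro p hp
  have hmem : U ∈ nhds p := hU.mem_nhds hp
  have hFd : ∀ i, alFd g x i p ≠ 0 := fun i => by
    refine Finset.prod_ne_zero_iff.mpr fun j hj => sub_ne_zero.mpr ?_
    exact hdist p hp i j (fun h => (Finset.mem_erase.mp hj).1 h.symm)
  -- key derivative lemma
  have key : ∀ (c : ℂ) (α : ℂ → ℂ), (∀ q ∈ U, ∀ i, x i q ≠ c) →
      DifferentiableOn ℂ α U → (∀ q ∈ U, α q ≠ 0) →
      (∀ q ∈ U, (α q) ^ 2 = ∏ i : Fin g, (x i q - c)) →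
      deriv α p = α p * alPsi g x y c p := by
    intro c α hxc hα hαne hα2
    have hda : DifferentiableAt ℂ α p := hα.differentiableAt hmem
    have hdx : ∀ i, DifferentiableAt ℂ (x i) p := fun i => (hx i).differentiableAt hmem
    have heq : (fun z => (α z) ^ 2) =ᶠ[nhds p] (fun z => ∏ i : Fin g, (x i z - c)) := by
      filter_upwards [hmem] with z hz using hα2 z hz
    have hL : deriv (fun z => (α z) ^ 2) p = 2 * α p * deriv α p := by
      rw [deriv_fun_pow hda 2]; ring
    have hP : HasDerivAt (fun z => ∏ i : Fin g, (x i z - c))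
        (∑ i : Fin g, (∏ j ∈ Finset.univ.erase i, (x j p - c)) • deriv (x i) p) p :=
      HasDerivAt.fun_finsetProd (fun i _ => ((hdx i).hasDerivAt).sub_const c)
    have hR : deriv (fun z => ∏ i : Fin g, (x i z - c)) p
        = ∑ i : Fin g, (∏ j ∈ Finset.univ.erase i, (x j p - c)) * deriv (x i) p := by
      simpa [smul_eq_mul] using hP.deriv
    have hmain : 2 * α p * deriv α p = 2 * α p * (α p * alPsi g x y c p) := by
      rw [← hL, heq.deriv_eq, hR]
      have expand : α p * alPsi g x y c p
          = ∑ i : Fin g, α p * (y i p / (alFd g x i p * (x i p - c))) := by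
        rw [alPsi, Finset.mul_sum]
      rw [expand, Finset.mul_sum]
      refine Finset.sum_congr rfl fun i _ => ?_
      have hxic : x i p - c ≠ 0 := sub_ne_zero.mpr (hxc p hp i)
      have hsq : α p * α p = (x i p - c) * ∏ j ∈ Finset.univ.erase i, (x j p - c) := by
        rw [Finset.mul_prod_erase Finset.univ (fun j => x j p - c) (Finset.mem_univ i),
          ← hα2 p hp]
        ring
      rw [hflow p hp i, show 2 * α p * (α p * (y i p / (alFd g x i p * (x i p - c))))
          = (α p * α p) * (2 * y i p) / (alFd g x i p * (x i p - c)) by ring, hsq]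
      field_simp [hFd i, hxic]
    have h2α : (2 : ℂ) * α p ≠ 0 := mul_ne_zero two_ne_zero (hαne p hp)
    calc deriv α p = (2 * α p * deriv α p) / (2 * α p) := by field_simp [hαne p hp]
    _ = (2 * α p * (α p * alPsi g x y c p)) / (2 * α p) := by rw [hmain]
    _ = α p * alPsi g x y c p := by field_simp
  have hd1 : deriv α₁ p = α₁ p * alPsi g x y (b 0) p := key (b 0) α₁ hx1 hα₁ hα₁ne hα₁2
  have hd2 : deriv α₂ p = α₂ p * alPsi g x y (b 1) p := key (b 1) α₂ hx2 hα₂ hα₂ne hα₂2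
  have part1 : alPsi g x y (b 1) p - alPsi g x y (b 0) p
      = (b 1 - b 0) *
        ∑ r : Fin g, y r p / ((b 0 - x r p) * (b 1 - x r p) * alFd g x r p) := by
    rw [alPsi, alPsi, ← Finset.sum_sub_distrib, Finset.mul_sum]
    refine Finset.sum_congr rfl fun i _ => ?_
    have h0 : x i p - b 0 ≠ 0 := sub_ne_zero.mpr (hx1 p hp i)
    have h1 : x i p - b 1 ≠ 0 := sub_ne_zero.mpr (hx2 p hp i)
    have h0' : b 0 - x i p ≠ 0 := fun h => h0 (by linear_combination -h)
    have h1' : b 1 - x i p ≠ 0 := fun h => h1 (by linear_combination -h)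
    field_simp [hFd i, h0, h1, h0', h1']
    ring
  refine ⟨part1, ?_, ?_⟩
  · rw [al12, part1]
    field_simp
  · rw [al12, hd1, hd2]
    ring
end

section
/- (Proposition 5.5(1)) Under the hypotheses of the hyperelliptic u_g-flow with the two branch indices a = 1, 2 and ψ_1 ≠ ψ_2 on U, one has 𝔇 = 𝔞^2 + ∂_s 𝔞 on U. -/
open Finset Polynomial

noncomputable def hFd {g : ℕ} (ξ : Fin g → ℂ) (i : Fin g) : ℂ :=
  ∏ j ∈ Finset.univ.erase i, (ξ i - ξ j)
noncomputable def hEe {g : ℕ} (ξ : Fin g → ℂ) (i : Fin g) : ℂ :=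
  ∑ k ∈ Finset.univ.erase i, ∏ j ∈ (Finset.univ.erase i).erase k, (ξ i - ξ j)
noncomputable def hfv {N : ℕ} (b : Fin N → ℂ) (z : ℂ) : ℂ := ∏ j, (z - b j)
noncomputable def hfdv {N : ℕ} (b : Fin N → ℂ) (z : ℂ) : ℂ :=
  ∑ t, ∏ j ∈ Finset.univ.erase t, (z - b j)

lemma deriv_fin_prod {ι : Type*} [DecidableEq ι] (s : Finset ι) (f : ι → Polynomial ℂ) :
    derivative (∏ i ∈ s, f i) = ∑ i ∈ s, (∏ j ∈ s.erase i, f j) * derivative (f i) := by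
  induction s using Finset.induction_on with
  | empty => simp
  | insert _ _ hx ih =>
    rename_i a s
    rw [Finset.prod_insert hx, derivative_mul, ih, Finset.sum_insert hx,
      Finset.erase_insert hx, Finset.mul_sum]
    congr 1
    · ring
    · apply Finset.sum_congr rfl
      intro i hi
      rw [Finset.erase_insert_of_ne (by rintro rfl; exact hx hi), Finset.prod_insert
        (fun h => hx (Finset.mem_of_mem_erase h))]
      ring

lemma eval_deriv_prod {ι : Type*} [DecidableEq ι] (s : Finset ι) (c : ι → ℂ) (z : ℂ) :
    (derivative (∏ j ∈ s, (X - C (c j)))).eval z = ∑ k ∈ s, ∏ j ∈ s.erase k, (z - c j) := by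
  rw [deriv_fin_prod]
  simp [eval_finset_sum, eval_prod]

lemma polyId {g N : ℕ} (hg : 1 ≤ g) (hN : N = 2*g+1) (ξ : Fin g → ℂ) (b : Fin N → ℂ)
    (hinj : Function.Injective ξ) (A B : Fin g → ℂ)
    (hB : ∀ m, B m * (hFd ξ m)^2 = hfv b (ξ m))
    (hA : ∀ m, A m * (hFd ξ m)^2 + 2 * B m * (hFd ξ m) * hEe ξ m = hfdv b (ξ m)) :
    (∏ j, (X - C (b j))) =
      (X + C (2*∑ i, ξ i - ∑ j, b j)) * (∏ i, (X - C (ξ i)))^2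
      + ∑ i, (C (A i) * (X - C (ξ i)) + C (B i)) *
          (∏ j ∈ Finset.univ.erase i, (X - C (ξ j)))^2 := by
  set F : Polynomial ℂ := ∏ i, (X - C (ξ i)) with hF
  set c : ℂ := 2*∑ i, ξ i - ∑ j, b j with hc
  set G : Fin g → Polynomial ℂ := fun i => ∏ j ∈ Finset.univ.erase i, (X - C (ξ j)) with hG
  set S : Polynomial ℂ := ∑ i, (C (A i) * (X - C (ξ i)) + C (B i)) * (G i)^2 with hS
  set P : Polynomial ℂ := (∏ j, (X - C (b j))) - ((X + C c) * F^2 + S) with hP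
  have hGFd : ∀ m, (G m).eval (ξ m) = hFd ξ m := by
    intro m; simp [hG, eval_prod, hFd]
  have hGz : ∀ i m, i ≠ m → (G i).eval (ξ m) = 0 := by
    intro i m him
    rw [hG]
    simp only [eval_prod, eval_sub, eval_X, eval_C]
    exact Finset.prod_eq_zero (Finset.mem_erase.mpr ⟨Ne.symm him, Finset.mem_univ m⟩) (sub_self _)
  have hFz : ∀ m, F.eval (ξ m) = 0 := by
    intro m
    rw [hF]
    simp only [eval_prod, eval_sub, eval_X, eval_C]
    exact Finset.prod_eq_zero (Finset.mem_univ m) (sub_self _)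
  -- eval P at ξ m
  have hev : ∀ m, P.eval (ξ m) = 0 := by
    intro m
    have hSe : S.eval (ξ m) = B m * (hFd ξ m)^2 := by
      rw [hS, eval_finset_sum]
      rw [Finset.sum_eq_single m]
      · simp [hGFd m]
      · intro i _ him
        simp [hGz i m him]
      · simp
    simp only [hP, eval_sub, eval_add, eval_mul, eval_pow, hFz, eval_prod, eval_sub, eval_X,
      eval_C, hSe]
    rw [hB m]
    simp [hfv]
  -- eval derivative P at ξ m
  have hev' : ∀ m, (derivative P).eval (ξ m) = 0 := by
    intro m
    have hGd : (derivative (G m)).eval (ξ m) = hEe ξ m := by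
      rw [hG, eval_deriv_prod]; rfl
    have hSd : (derivative S).eval (ξ m) = A m * (hFd ξ m)^2 + 2 * B m * (hFd ξ m) * hEe ξ m := by
      rw [hS, map_sum, eval_finset_sum]
      rw [Finset.sum_eq_single m]
      · simp only [derivative_mul, derivative_add, derivative_sub, derivative_X, derivative_C,
          derivative_pow, eval_add, eval_mul, eval_pow, hGFd m, hGd, eval_sub, eval_X, eval_C,
          eval_ofNat, eval_zero, eval_one, zero_mul, mul_zero, add_zero, zero_add, mul_one]
        ring
      · intro i _ him
        rw [derivative_mul, derivative_pow]
        simp [hGz i m him]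
      · simp
    have hfd : (derivative (∏ j, (X - C (b j)))).eval (ξ m) = hfdv b (ξ m) := by
      rw [eval_deriv_prod]; rfl
    rw [hP]
    rw [derivative_sub, derivative_add, derivative_mul, derivative_pow]
    simp only [eval_sub, eval_add, eval_mul, eval_pow, hFz, hfd, hSd, derivative_add,
      derivative_X, derivative_C, eval_ofNat, mul_zero, zero_mul, add_zero, zero_add,
      eval_C, eval_X, eval_one]
    rw [← hA m]
    ring
  -- square divisibility
  have hdvd : ∀ m, (X - C (ξ m))^2 ∣ P := by
    intro m
    obtain ⟨Q, hQ⟩ := dvd_iff_isRoot.mpr (hev m)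
    have hQ0 : Q.eval (ξ m) = 0 := by
      have := hev' m
      rw [hQ, derivative_mul, derivative_sub, derivative_X, derivative_C] at this
      simpa using this
    obtain ⟨R, hR⟩ := dvd_iff_isRoot.mpr hQ0
    exact ⟨R, by rw [hQ, hR]; ring⟩
  have hFdvd : F^2 ∣ P := by
    rw [hF, ← Finset.prod_pow]
    apply Finset.prod_dvd_of_coprime
    · intro i _ j _ hij
      exact (Polynomial.pairwise_coprime_X_sub_C hinj hij).pow
    · intro m _
      exact hdvd m
  -- degree bound
  have hFdeg : F.natDegree = g := by
    rw [hF, natDegree_prod _ _ (fun i _ => X_sub_C_ne_zero (ξ i))]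
    simp
  have hf0 : (∏ j : Fin N, (X - C (b j))).natDegree = N := by
    rw [natDegree_prod _ _ (fun i _ => X_sub_C_ne_zero (b i))]
    simp
  have hfmonic : (∏ j : Fin N, (X - C (b j))).Monic :=
    monic_prod_of_monic _ _ (fun i _ => monic_X_sub_C (b i))
  have hmonic2 : ((X + C c) * F^2).Monic :=
    (monic_X_add_C c).mul ((monic_prod_of_monic _ _ (fun i _ => monic_X_sub_C (ξ i))).pow 2)
  have hdeg2 : ((X + C c) * F^2).natDegree = 2*g+1 := by
    rw [natDegree_mul (monic_X_add_C c).ne_zero (pow_ne_zero 2 (by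
      exact (monic_prod_of_monic _ _ (fun i _ => monic_X_sub_C (ξ i))).ne_zero)),
      natDegree_X_add_C, natDegree_pow, hFdeg]
    ring
  have hSdeg : ∀ i : Fin g, ((C (A i) * (X - C (ξ i)) + C (B i)) * (G i)^2).natDegree ≤ 2*g-1 := by
    intro i
    apply le_trans (natDegree_mul_le)
    have h1 : (C (A i) * (X - C (ξ i)) + C (B i)).natDegree ≤ 1 := by
      apply le_trans (natDegree_add_le _ _)
      simp only [natDegree_C, max_le_iff]
      constructor
      · exact le_trans (natDegree_mul_le) (by simp [natDegree_X_sub_C])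
      · omega
    have h2 : ((G i)^2).natDegree ≤ 2*(g-1) := by
      rw [natDegree_pow]
      have : (G i).natDegree ≤ g - 1 := by
        rw [hG, natDegree_prod _ _ (fun j _ => X_sub_C_ne_zero (ξ j))]
        simp [Finset.card_erase_of_mem]
      omega
    omega
  have hSdegle : S.natDegree ≤ 2*g-1 := by
    rw [hS]
    exact natDegree_sum_le_of_forall_le _ _ (fun i _ => hSdeg i)
  -- coefficients of P vanish from 2g on
  have hcoeff : ∀ n, 2*g ≤ n → P.coeff n = 0 := by
    intro n hn
    have hSc : S.coeff n = 0 := coeff_eq_zero_of_natDegree_lt (by omega)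
    rw [hP, coeff_sub, coeff_add, hSc, add_zero]
    rcases eq_or_lt_of_le hn with h | h
    · -- n = 2g : next coefficients
      have hnc1 : (∏ j : Fin N, (X - C (b j))).coeff n = -∑ j, b j := by
        have := prod_X_sub_C_nextCoeff (s := (Finset.univ : Finset (Fin N))) b
        rw [nextCoeff_of_natDegree_pos (by rw [hf0]; omega), hf0] at this
        rw [show n = N - 1 by omega]
        exact this
      have hnc2 : ((X + C c) * F^2).coeff n = c + 2 * (-∑ i, ξ i) := by
        have hm : nextCoeff ((X + C c) * F^2) = c + 2 * (-∑ i, ξ i) := by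
          rw [Monic.nextCoeff_mul (monic_X_add_C c) ((monic_prod_of_monic _ _
            (fun i _ => monic_X_sub_C (ξ i))).pow 2), nextCoeff_X_add_C]
          congr 1
          rw [pow_two, Monic.nextCoeff_mul (monic_prod_of_monic _ _
            (fun i _ => monic_X_sub_C (ξ i))) (monic_prod_of_monic _ _
            (fun i _ => monic_X_sub_C (ξ i))), prod_X_sub_C_nextCoeff]
          ring
        rw [nextCoeff_of_natDegree_pos (by omega), hdeg2] at hm
        rw [show n = 2*g+1-1 by omega]
        exact hm
      rw [hnc1, hnc2, hc]
      ring
    · rcases eq_or_lt_of_le (Nat.succ_le_of_lt h) with h2 | h2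
      · -- n = 2g+1 : leading coefficients
        have h1 : (∏ j : Fin N, (X - C (b j))).coeff n = 1 := by
          have := hfmonic.coeff_natDegree
          rw [hf0] at this
          rw [show n = N by omega]
          exact this
        have h2' : ((X + C c) * F^2).coeff n = 1 := by
          have := hmonic2.coeff_natDegree
          rw [hdeg2] at this
          rw [show n = 2*g+1 by omega]
          exact this
        rw [h1, h2']; ring
      · rw [coeff_eq_zero_of_natDegree_lt (by omega),
          coeff_eq_zero_of_natDegree_lt (by rw [hdeg2]; omega)]
        ring
  have hPdeg : P.natDegree ≤ 2*g-1 :=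
    natDegree_le_iff_coeff_eq_zero.mpr (fun m hm => hcoeff m (by omega))
  have hP0 : P = 0 := by
    by_contra hne
    have h1 : (F^2).natDegree ≤ P.natDegree := natDegree_le_of_dvd hFdvd hne
    rw [natDegree_pow, hFdeg] at h1
    omega
  have h := sub_eq_zero.mp (hP ▸ hP0)
  linear_combination h

lemma evalId {g N : ℕ} (hg : 1 ≤ g) (hN : N = 2*g+1) (ξ : Fin g → ℂ) (b : Fin N → ℂ)
    (hinj : Function.Injective ξ) (A B : Fin g → ℂ)
    (hB : ∀ m, B m * (hFd ξ m)^2 = hfv b (ξ m))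
    (hA : ∀ m, A m * (hFd ξ m)^2 + 2 * B m * (hFd ξ m) * hEe ξ m = hfdv b (ξ m))
    (β : ℂ) (hroot : hfv b β = 0) (hβ : ∀ i, ξ i ≠ β) :
    ∑ i, (A i / (ξ i - β) - B i / (ξ i - β)^2) = β + (2*∑ i, ξ i - ∑ j, b j) := by
  have hev := congrArg (Polynomial.eval β) (polyId hg hN ξ b hinj A B hB hA)
  simp only [eval_prod, eval_add, eval_mul, eval_pow, eval_sub, eval_X, eval_C,
    eval_finset_sum] at hev
  have hroot' : (∏ j, (β - b j)) = 0 := hroot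
  set Fβ : ℂ := ∏ i, (β - ξ i) with hFβdef
  have hFβ : Fβ ≠ 0 :=
    Finset.prod_ne_zero_iff.mpr (fun i _ => sub_ne_zero.mpr (fun h => hβ i h.symm))
  have hterm : ∀ i ∈ Finset.univ, (A i / (ξ i - β) - B i / (ξ i - β)^2) * Fβ^2
      = -((A i * (β - ξ i) + B i) * (∏ j ∈ Finset.univ.erase i, (β - ξ j))^2) := by
    intro i _
    have hGF : (∏ j ∈ Finset.univ.erase i, (β - ξ j)) * (β - ξ i) = Fβ :=
      Finset.prod_erase_mul _ _ (Finset.mem_univ i)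
    have hne : ξ i - β ≠ 0 := sub_ne_zero.mpr (hβ i)
    rw [← hGF]
    field_simp
    ring
  have hmain : (∑ i, (A i / (ξ i - β) - B i / (ξ i - β)^2)) * Fβ^2
      = (β + (2*∑ i, ξ i - ∑ j, b j)) * Fβ^2 := by
    rw [Finset.sum_mul, Finset.sum_congr rfl hterm, Finset.sum_neg_distrib]
    linear_combination hev - hroot'
  exact mul_right_cancel₀ (pow_ne_zero 2 hFβ) hmain

set_option maxHeartbeats 2000000 in
lemma keyId {g N : ℕ} (hg : 1 ≤ g) (hN : N = 2*g+1) (ξ η : Fin g → ℂ) (b : Fin N → ℂ)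
    (hinj : Function.Injective ξ) (hsq : ∀ i, (η i)^2 = hfv b (ξ i))
    (β : ℂ) (hroot : hfv b β = 0) (hβ : ∀ i, ξ i ≠ β) :
    (∑ i, η i / (hFd ξ i * (ξ i - β)))^2
      + ∑ i, (hfdv b (ξ i) / ((hFd ξ i)^2 * (ξ i - β))
          - 2*(η i)^2 / ((hFd ξ i)^2 * (ξ i - β)^2)
          - ∑ k ∈ Finset.univ.erase i,
              (2*(η i)^2 / ((hFd ξ i)^2 * (ξ i - ξ k) * (ξ i - β))
                - 2*(η i)*(η k) / (hFd ξ i * hFd ξ k * (ξ i - ξ k) * (ξ i - β))))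
      = β + (2*∑ i, ξ i - ∑ j, b j) := by
  classical
  have hFdne : ∀ i, hFd ξ i ≠ 0 := fun i => Finset.prod_ne_zero_iff.mpr
    (fun j hj => sub_ne_zero.mpr (fun h => (Finset.mem_erase.mp hj).1 (hinj h).symm))
  have hβne : ∀ i, ξ i - β ≠ 0 := fun i => sub_ne_zero.mpr (hβ i)
  have hξne : ∀ i k : Fin g, k ≠ i → ξ i - ξ k ≠ 0 :=
    fun i k hki => sub_ne_zero.mpr (fun h => hki (hinj h.symm))
  set A : Fin g → ℂ := fun i =>
    (hfdv b (ξ i) * hFd ξ i - 2*(η i)^2 * hEe ξ i) / (hFd ξ i)^3 with hAdef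
  set B : Fin g → ℂ := fun i => (η i)^2 / (hFd ξ i)^2 with hBdef
  have hB : ∀ m, B m * (hFd ξ m)^2 = hfv b (ξ m) := by
    intro m
    rw [← hsq m, hBdef]
    exact div_mul_cancel₀ _ (pow_ne_zero 2 (hFdne m))
  have hA : ∀ m, A m * (hFd ξ m)^2 + 2 * B m * (hFd ξ m) * hEe ξ m = hfdv b (ξ m) := by
    intro m
    have h1 := hFdne m
    rw [hAdef, hBdef]
    field_simp
    ring
  have heval := evalId hg hN ξ b hinj A B hB hA β hroot hβ
  -- step 1 : expand the square
  have step1 : (∑ i, η i / (hFd ξ i * (ξ i - β)))^2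
      = ∑ i, ((η i / (hFd ξ i * (ξ i - β))) * (η i / (hFd ξ i * (ξ i - β)))
          + ∑ k ∈ Finset.univ.erase i,
              (η i / (hFd ξ i * (ξ i - β))) * (η k / (hFd ξ k * (ξ k - β)))) := by
    rw [sq, Finset.sum_mul_sum]
    exact Finset.sum_congr rfl (fun i _ =>
      (Finset.add_sum_erase _ (fun k => (η i / (hFd ξ i * (ξ i - β))) *
        (η k / (hFd ξ k * (ξ k - β)))) (Finset.mem_univ i)).symm)
  -- step 2 : antisymmetric cancellation
  have step2 : ∑ i, ∑ k ∈ Finset.univ.erase i,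
      ((η i / (hFd ξ i * (ξ i - β))) * (η k / (hFd ξ k * (ξ k - β)))
        + 2*(η i)*(η k) / (hFd ξ i * hFd ξ k * (ξ i - ξ k) * (ξ i - β))) = 0 := by
    rw [Finset.sum_sigma']
    refine Finset.sum_involution (fun a _ => ⟨a.2, a.1⟩) ?_ ?_ ?_ ?_
    · rintro ⟨i, k⟩ ha
      have hki : k ≠ i := (Finset.mem_erase.mp (Finset.mem_sigma.mp ha).2).1
      have h1 := hFdne i; have h2 := hFdne k
      have h3 := hβne i; have h4 := hβne k
      have h5 := hξne i k hki
      have h6 := hξne k i (Ne.symm hki)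
      have hkey : (ξ i - ξ k)⁻¹ * (ξ i - β)⁻¹ + (ξ k - ξ i)⁻¹ * (ξ k - β)⁻¹
          = -((ξ i - β)⁻¹ * (ξ k - β)⁻¹) := by
        field_simp
        ring
      simp only [div_eq_mul_inv, mul_inv]
      linear_combination (2*η i*η k*(hFd ξ i)⁻¹*(hFd ξ k)⁻¹) * hkey
    · rintro ⟨i, k⟩ ha _
      intro h
      exact (Finset.mem_erase.mp (Finset.mem_sigma.mp ha).2).1 (congrArg Sigma.fst h)
    · rintro ⟨i, k⟩ ha
      refine Finset.mem_sigma.mpr ⟨Finset.mem_univ _, ?_⟩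
      have hki : k ≠ i := (Finset.mem_erase.mp (Finset.mem_sigma.mp ha).2).1
      exact Finset.mem_erase.mpr ⟨Ne.symm hki, Finset.mem_univ _⟩
    · rintro ⟨i, k⟩ ha
      rfl
  -- step 3 : sigma-sum to hEe
  have step3 : ∀ i : Fin g, ∑ k ∈ Finset.univ.erase i,
      2*(η i)^2 / ((hFd ξ i)^2 * (ξ i - ξ k) * (ξ i - β))
      = 2*(η i)^2 * hEe ξ i / ((hFd ξ i)^3 * (ξ i - β)) := by
    intro i
    have : hEe ξ i = ∑ k ∈ Finset.univ.erase i,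
        ∏ j ∈ (Finset.univ.erase i).erase k, (ξ i - ξ j) := rfl
    rw [this, Finset.mul_sum, Finset.sum_div]
    apply Finset.sum_congr rfl
    intro k hk
    have hpm : (∏ j ∈ (Finset.univ.erase i).erase k, (ξ i - ξ j)) * (ξ i - ξ k) = hFd ξ i :=
      Finset.prod_erase_mul _ _ hk
    have hki : k ≠ i := (Finset.mem_erase.mp hk).1
    have h1 := hFdne i
    have h3 := hβne i
    have h5 := hξne i k hki
    rw [div_eq_div_iff (by exact mul_ne_zero (mul_ne_zero (pow_ne_zero 2 h1) h5) h3)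
      (by exact mul_ne_zero (pow_ne_zero 3 h1) h3)]
    linear_combination (-(2*(η i)^2*(ξ i - β)*(hFd ξ i)^2)) * hpm
  -- assemble
  rw [step1, ← Finset.sum_add_distrib]
  have main : ∀ i ∈ Finset.univ, ((η i / (hFd ξ i * (ξ i - β))) * (η i / (hFd ξ i * (ξ i - β)))
          + ∑ k ∈ Finset.univ.erase i,
              (η i / (hFd ξ i * (ξ i - β))) * (η k / (hFd ξ k * (ξ k - β))))
        + (hfdv b (ξ i) / ((hFd ξ i)^2 * (ξ i - β))
          - 2*(η i)^2 / ((hFd ξ i)^2 * (ξ i - β)^2)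
          - ∑ k ∈ Finset.univ.erase i,
              (2*(η i)^2 / ((hFd ξ i)^2 * (ξ i - ξ k) * (ξ i - β))
                - 2*(η i)*(η k) / (hFd ξ i * hFd ξ k * (ξ i - ξ k) * (ξ i - β))))
      = (A i / (ξ i - β) - B i / (ξ i - β)^2)
        + ∑ k ∈ Finset.univ.erase i,
            ((η i / (hFd ξ i * (ξ i - β))) * (η k / (hFd ξ k * (ξ k - β)))
              + 2*(η i)*(η k) / (hFd ξ i * hFd ξ k * (ξ i - ξ k) * (ξ i - β))) := by
    intro i _
    rw [Finset.sum_sub_distrib, Finset.sum_add_distrib, step3 i]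
    have h1 := hFdne i
    have h3 := hβne i
    have hsc : (η i / (hFd ξ i * (ξ i - β))) * (η i / (hFd ξ i * (ξ i - β)))
        + (hfdv b (ξ i) / ((hFd ξ i)^2 * (ξ i - β))
          - 2*(η i)^2 / ((hFd ξ i)^2 * (ξ i - β)^2)
          - 2*(η i)^2 * hEe ξ i / ((hFd ξ i)^3 * (ξ i - β)))
        = A i / (ξ i - β) - B i / (ξ i - β)^2 := by
      simp only [hAdef, hBdef]
      have hcancel : hFd ξ i * (hFd ξ i)⁻¹ = 1 := mul_inv_cancel₀ h1
      simp only [div_eq_mul_inv, mul_inv, ← inv_pow]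
      linear_combination (-(hfdv b (ξ i) * ((hFd ξ i)⁻¹)^2 * (ξ i - β)⁻¹)) * hcancel
    linear_combination hsc
  rw [Finset.sum_congr rfl main, Finset.sum_add_distrib, step2, add_zero, heval]

lemma convTerm {g N : ℕ} (ξ η : Fin g → ℂ) (b : Fin N → ℂ) (i : Fin g) (β : ℂ)
    (hFdne : ∀ i, hFd ξ i ≠ 0) (hβne : ξ i - β ≠ 0)
    (hξne : ∀ k ∈ Finset.univ.erase i, ξ i - ξ k ≠ 0) :
    (hfdv b (ξ i) / hFd ξ i * (hFd ξ i * (ξ i - β))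
      - η i * ((∑ k ∈ Finset.univ.erase i, (∏ j ∈ (Finset.univ.erase i).erase k, (ξ i - ξ j))
            * (2 * η i / hFd ξ i - 2 * η k / hFd ξ k)) * (ξ i - β)
          + hFd ξ i * (2 * η i / hFd ξ i))) / (hFd ξ i * (ξ i - β))^2
    = hfdv b (ξ i) / ((hFd ξ i)^2 * (ξ i - β))
      - 2*(η i)^2 / ((hFd ξ i)^2 * (ξ i - β)^2)
      - ∑ k ∈ Finset.univ.erase i,
          (2*(η i)^2 / ((hFd ξ i)^2 * (ξ i - ξ k) * (ξ i - β))
            - 2*(η i)*(η k) / (hFd ξ i * hFd ξ k * (ξ i - ξ k) * (ξ i - β))) := by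
  have h1 := hFdne i
  have hcf : hFd ξ i * (hFd ξ i)⁻¹ = 1 := mul_inv_cancel₀ h1
  have hcb : (ξ i - β) * (ξ i - β)⁻¹ = 1 := mul_inv_cancel₀ hβne
  set E : ℂ := ∑ k ∈ Finset.univ.erase i, (∏ j ∈ (Finset.univ.erase i).erase k, (ξ i - ξ j))
      * (2 * η i / hFd ξ i - 2 * η k / hFd ξ k) with hE
  have hmain : (hfdv b (ξ i) / hFd ξ i * (hFd ξ i * (ξ i - β))
      - η i * (E * (ξ i - β) + hFd ξ i * (2 * η i / hFd ξ i))) / (hFd ξ i * (ξ i - β))^2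
      = hfdv b (ξ i) / ((hFd ξ i)^2 * (ξ i - β))
        - 2*(η i)^2 / ((hFd ξ i)^2 * (ξ i - β)^2)
        - η i * E / ((hFd ξ i)^2 * (ξ i - β)) := by
    simp only [div_eq_mul_inv, mul_inv, ← inv_pow]
    linear_combination ((ξ i - β) * ((ξ i - β)⁻¹)^2 * hfdv b (ξ i) * ((hFd ξ i)⁻¹)^2
        - 2*(η i)^2 * ((hFd ξ i)⁻¹)^2 * ((ξ i - β)⁻¹)^2) * hcf
      + (hfdv b (ξ i) * ((hFd ξ i)⁻¹)^2 * (ξ i - β)⁻¹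
          - η i * E * ((hFd ξ i)⁻¹)^2 * (ξ i - β)⁻¹) * hcb
  rw [hmain]
  have hEsplit : η i * E / ((hFd ξ i)^2 * (ξ i - β))
      = ∑ k ∈ Finset.univ.erase i,
          (2*(η i)^2 / ((hFd ξ i)^2 * (ξ i - ξ k) * (ξ i - β))
            - 2*(η i)*(η k) / (hFd ξ i * hFd ξ k * (ξ i - ξ k) * (ξ i - β))) := by
    rw [hE, Finset.mul_sum, Finset.sum_div]
    apply Finset.sum_congr rfl
    intro k hk
    have hpm : (∏ j ∈ (Finset.univ.erase i).erase k, (ξ i - ξ j)) * (ξ i - ξ k) = hFd ξ i :=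
      Finset.prod_erase_mul _ _ hk
    have h5 := hξne k hk
    have h2 := hFdne k
    have hP : (∏ j ∈ (Finset.univ.erase i).erase k, (ξ i - ξ j)) = hFd ξ i * (ξ i - ξ k)⁻¹ := by
      field_simp
      linear_combination hpm
    rw [hP]
    simp only [div_eq_mul_inv, mul_inv, ← inv_pow]
    linear_combination ((2*(η i)^2 * ((hFd ξ i)⁻¹)^2
        - 2*(η i)*(η k) * (hFd ξ i)⁻¹ * (hFd ξ k)⁻¹) * ((ξ i - ξ k)⁻¹ * (ξ i - β)⁻¹)) * hcf
  rw [hEsplit]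

noncomputable def frakA (g : ℕ) (x y : Fin g → ℂ → ℂ) (b1 b2 : ℂ) (p : ℂ) : ℂ :=
  (b2 - b1) / (alPsi g x y b2 p - alPsi g x y b1 p)

noncomputable def frakD (g : ℕ) (x y : Fin g → ℂ → ℂ) (b1 b2 : ℂ) (p : ℂ) : ℂ :=
  (b2 - b1) * (alPsi g x y b1 p + alPsi g x y b2 p) / (alPsi g x y b2 p - alPsi g x y b1 p)

theorem stmt10
    (g : ℕ) (hg : 1 ≤ g)
    (b : Fin (2 * g + 1) → ℂ) (hb : Function.Injective b)
    (U : Set ℂ) (hU : IsOpen U) (hUne : U.Nonempty)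
    (x y : Fin g → ℂ → ℂ)
    (hx : ∀ i, DifferentiableOn ℂ (x i) U)
    (hy : ∀ i, DifferentiableOn ℂ (y i) U)
    (hdist : ∀ p ∈ U, ∀ i j, i ≠ j → x i p ≠ x j p)
    (hy2 : ∀ p ∈ U, ∀ i, (y i p) ^ 2 = ∏ j, (x i p - b j))
    (hyne : ∀ p ∈ U, ∀ i, y i p ≠ 0)
    (hflow : ∀ p ∈ U, ∀ i, deriv (x i) p = 2 * y i p / alFd g x i p)
    (hx1 : ∀ p ∈ U, ∀ i, x i p ≠ b 0)
    (hx2 : ∀ p ∈ U, ∀ i, x i p ≠ b 1)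
    (hpsine : ∀ p ∈ U, alPsi g x y (b 0) p ≠ alPsi g x y (b 1) p)
 :
    ∀ p ∈ U,
      frakD g x y (b 0) (b 1) p
        = (frakA g x y (b 0) (b 1) p) ^ 2 + deriv (frakA g x y (b 0) (b 1)) p := by
  intro p hp
  have hmem : U ∈ nhds p := hU.mem_nhds hp
  set ξ : Fin g → ℂ := fun i => x i p with hξdef
  have hinj : Function.Injective ξ := by
    intro i j h
    by_contra hne
    exact hdist p hp i j hne h
  have hFdeq : ∀ i, alFd g x i p = hFd ξ i := fun i => rfl
  have hFdne : ∀ i, hFd ξ i ≠ 0 := fun i => Finset.prod_ne_zero_iff.mpr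
    (fun j hj => sub_ne_zero.mpr (fun h => (Finset.mem_erase.mp hj).1 (hinj h).symm))
  have hxd : ∀ i, HasDerivAt (x i) (2 * y i p / alFd g x i p) p := by
    intro i
    have h := ((hx i).differentiableAt hmem).hasDerivAt
    rwa [hflow p hp i] at h
  have hFdd : ∀ i, HasDerivAt (fun t => alFd g x i t)
      (∑ k ∈ Finset.univ.erase i, (∏ j ∈ (Finset.univ.erase i).erase k, (x i p - x j p))
        * (2 * y i p / alFd g x i p - 2 * y k p / alFd g x k p)) p := by
    intro i
    have h : ∀ k ∈ Finset.univ.erase i, HasDerivAt (fun t => x i t - x k t)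
        (2 * y i p / alFd g x i p - 2 * y k p / alFd g x k p) p :=
      fun k _ => (hxd i).sub (hxd k)
    have h2 := HasDerivAt.fun_finsetProd h
    simpa [alFd, smul_eq_mul] using h2
  have hyd : ∀ i, HasDerivAt (y i) (hfdv b (x i p) / alFd g x i p) p := by
    intro i
    have hydp := ((hy i).differentiableAt hmem).hasDerivAt
    have hsqd : HasDerivAt (fun t => (y i t)^2) (2 * y i p * deriv (y i) p) p := by
      simpa using hydp.fun_pow 2
    have hprod : HasDerivAt (fun t => ∏ j, (x i t - b j))
        (hfdv b (x i p) * (2 * y i p / alFd g x i p)) p := by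
      have h : ∀ j ∈ Finset.univ, HasDerivAt (fun t => x i t - b j)
          (2 * y i p / alFd g x i p) p := fun j _ => (hxd i).sub_const _
      have h2 := HasDerivAt.fun_finsetProd h
      have h3 : (∑ j : Fin (2*g+1), (∏ k ∈ Finset.univ.erase j, (x i p - b k))
          • (2 * y i p / alFd g x i p)) = hfdv b (x i p) * (2 * y i p / alFd g x i p) := by
        simp only [smul_eq_mul, hfdv, Finset.sum_mul]
      rw [← h3]
      exact h2
    have heq : (fun t => (y i t)^2) =ᶠ[nhds p] (fun t => ∏ j, (x i t - b j)) :=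
      Filter.eventuallyEq_of_mem hmem (fun t ht => hy2 t ht i)
    have hder : HasDerivAt (fun t => (y i t)^2)
        (hfdv b (x i p) * (2 * y i p / alFd g x i p)) p :=
      hprod.congr_of_eventuallyEq heq
    have huniq : 2 * y i p * deriv (y i) p = hfdv b (x i p) * (2 * y i p / alFd g x i p) :=
      hsqd.unique hder
    have hy0 := hyne p hp i
    have hF0 : alFd g x i p ≠ 0 := hFdeq i ▸ hFdne i
    have hval : deriv (y i) p = hfdv b (x i p) / alFd g x i p := by
      rw [eq_div_iff hF0]
      have h2 : (2 * y i p) * (deriv (y i) p * alFd g x i p)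
          = (2 * y i p) * hfdv b (x i p) := by
        field_simp at huniq
        linear_combination (2 * y i p) * huniq
      exact mul_left_cancel₀ (mul_ne_zero two_ne_zero hy0) h2
    rw [← hval]
    exact hydp
  -- the combined existence statement
  have H : ∀ β : ℂ, (∀ i, x i p ≠ β) → hfv b β = 0 →
      ∃ S : ℂ, HasDerivAt (alPsi g x y β) S p ∧
        (alPsi g x y β p)^2 + S = β + (2*∑ i, x i p - ∑ j, b j) := by
    intro β hβ hroot
    have hβne : ∀ i, ξ i - β ≠ 0 := fun i => sub_ne_zero.mpr (hβ i)
    have hξne : ∀ i, ∀ k ∈ Finset.univ.erase i, ξ i - ξ k ≠ 0 := fun i k hk =>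
      sub_ne_zero.mpr (fun h => (Finset.mem_erase.mp hk).1 (hinj h).symm)
    have hterm : ∀ i ∈ Finset.univ, HasDerivAt
        (fun t => y i t / (alFd g x i t * (x i t - β)))
        (hfdv b (ξ i) / ((hFd ξ i)^2 * (ξ i - β))
          - 2*(y i p)^2 / ((hFd ξ i)^2 * (ξ i - β)^2)
          - ∑ k ∈ Finset.univ.erase i,
              (2*(y i p)^2 / ((hFd ξ i)^2 * (ξ i - ξ k) * (ξ i - β))
                - 2*(y i p)*(y k p) / (hFd ξ i * hFd ξ k * (ξ i - ξ k) * (ξ i - β)))) p := by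
      intro i _
      have hdenom : HasDerivAt (fun t => alFd g x i t * (x i t - β))
          ((∑ k ∈ Finset.univ.erase i, (∏ j ∈ (Finset.univ.erase i).erase k, (x i p - x j p))
            * (2 * y i p / alFd g x i p - 2 * y k p / alFd g x k p)) * (x i p - β)
            + alFd g x i p * (2 * y i p / alFd g x i p)) p :=
        (hFdd i).mul ((hxd i).sub_const β)
      have hdne : alFd g x i p * (x i p - β) ≠ 0 :=
        mul_ne_zero (hFdeq i ▸ hFdne i) (hβne i)
      have hq := (hyd i).div hdenom hdne
      exact hq.congr_deriv (convTerm ξ (fun i => y i p) b i β hFdne (hβne i) (hξne i))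
    have hsum := HasDerivAt.fun_sum hterm
    refine ⟨_, hsum, ?_⟩
    exact keyId hg rfl ξ (fun i => y i p) b hinj (fun i => hy2 p hp i) β hroot
      (fun i => hβ i)
  have hroot0 : hfv b (b 0) = 0 :=
    Finset.prod_eq_zero (Finset.mem_univ 0) (sub_self _)
  have hroot1 : hfv b (b 1) = 0 :=
    Finset.prod_eq_zero (Finset.mem_univ 1) (sub_self _)
  obtain ⟨S0, hd0, hk0⟩ := H (b 0) (hx1 p hp) hroot0
  obtain ⟨S1, hd1, hk1⟩ := H (b 1) (hx2 p hp) hroot1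
  have hne : alPsi g x y (b 1) p - alPsi g x y (b 0) p ≠ 0 :=
    sub_ne_zero.mpr (Ne.symm (hpsine p hp))
  have hdA : HasDerivAt (frakA g x y (b 0) (b 1))
      ((0 * (alPsi g x y (b 1) p - alPsi g x y (b 0) p) - (b 1 - b 0) * (S1 - S0))
        / (alPsi g x y (b 1) p - alPsi g x y (b 0) p)^2) p :=
    (hasDerivAt_const p (b 1 - b 0)).div (hd1.sub hd0) hne
  rw [hdA.deriv]
  simp only [frakD, frakA]
  rw [div_pow, ← add_div, div_eq_div_iff hne (pow_ne_zero 2 hne)]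
  linear_combination ((b 1 - b 0) * (alPsi g x y (b 1) p - alPsi g x y (b 0) p)) * (hk1 - hk0)
end

section
/- (Proposition 5.5(4)) Under the hypotheses of the hyperelliptic u_g-flow with the two branch indices a = 1, 2 and ψ_1 ≠ ψ_2 on U, one has ∂_s 𝔇 = 2 𝔞^2 (ψ_2 ∂_s ψ_1 − ψ_1 ∂_s ψ_2) / (b_2 − b_1) on U. -/
open Finset

theorem stmt12
    (g : ℕ) (hg : 1 ≤ g)
    (b : Fin (2 * g + 1) → ℂ) (hb : Function.Injective b)
    (U : Set ℂ) (hU : IsOpen U) (hUne : U.Nonempty)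
    (x y : Fin g → ℂ → ℂ)
    (hx : ∀ i, DifferentiableOn ℂ (x i) U)
    (hy : ∀ i, DifferentiableOn ℂ (y i) U)
    (hdist : ∀ p ∈ U, ∀ i j, i ≠ j → x i p ≠ x j p)
    (hy2 : ∀ p ∈ U, ∀ i, (y i p) ^ 2 = ∏ j, (x i p - b j))
    (hyne : ∀ p ∈ U, ∀ i, y i p ≠ 0)
    (hflow : ∀ p ∈ U, ∀ i, deriv (x i) p = 2 * y i p / alFd g x i p)
    (hx1 : ∀ p ∈ U, ∀ i, x i p ≠ b 0)
    (hx2 : ∀ p ∈ U, ∀ i, x i p ≠ b 1)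
    (hpsine : ∀ p ∈ U, alPsi g x y (b 0) p ≠ alPsi g x y (b 1) p)
 :
    ∀ p ∈ U,
      deriv (frakD g x y (b 0) (b 1)) p
        = 2 * (frakA g x y (b 0) (b 1) p) ^ 2 *
            (alPsi g x y (b 1) p * deriv (alPsi g x y (b 0)) p
              - alPsi g x y (b 0) p * deriv (alPsi g x y (b 1)) p) / (b 1 - b 0) := by
  intro p hp
  have hpU : U ∈ nhds p := hU.mem_nhds hp
  have hxA : ∀ i, DifferentiableAt ℂ (x i) p := fun i => (hx i).differentiableAt hpU
  have hyA : ∀ i, DifferentiableAt ℂ (y i) p := fun i => (hy i).differentiableAt hpU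
  have hFd : ∀ i, alFd g x i p ≠ 0 := by
    intro i
    unfold alFd
    exact Finset.prod_ne_zero_iff.2 fun j hj =>
      sub_ne_zero_of_ne (hdist p hp i j (Finset.ne_of_mem_erase hj).symm)
  have hdpsi : ∀ ba : ℂ, (∀ i, x i p ≠ ba) → DifferentiableAt ℂ (alPsi g x y ba) p := by
    intro ba hba
    unfold alPsi
    apply DifferentiableAt.fun_sum
    intro i _
    apply DifferentiableAt.div (hyA i)
    · apply DifferentiableAt.mul
      · unfold alFd
        exact DifferentiableAt.fun_finsetProd fun j _ => (hxA i).sub (hxA j)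
      · exact (hxA i).sub_const ba
    · exact mul_ne_zero (hFd i) (sub_ne_zero_of_ne (hba i))
  have hd1 : DifferentiableAt ℂ (alPsi g x y (b 0)) p := hdpsi _ (hx1 p hp)
  have hd2 : DifferentiableAt ℂ (alPsi g x y (b 1)) p := hdpsi _ (hx2 p hp)
  have hD : alPsi g x y (b 1) p - alPsi g x y (b 0) p ≠ 0 :=
    sub_ne_zero_of_ne (Ne.symm (hpsine p hp))
  have hc : b 1 - b 0 ≠ 0 := by
    refine sub_ne_zero_of_ne fun h => ?_
    have := hb h
    simp [Fin.ext_iff] at this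
    omega
  have hderiv : deriv (frakD g x y (b 0) (b 1)) p
      = ((b 1 - b 0) * (deriv (alPsi g x y (b 0)) p + deriv (alPsi g x y (b 1)) p)
          * (alPsi g x y (b 1) p - alPsi g x y (b 0) p)
        - (b 1 - b 0) * (alPsi g x y (b 0) p + alPsi g x y (b 1) p)
          * (deriv (alPsi g x y (b 1)) p - deriv (alPsi g x y (b 0)) p))
        / (alPsi g x y (b 1) p - alPsi g x y (b 0) p) ^ 2 := by
    unfold frakD
    rw [deriv_fun_div (((hd1.fun_add hd2).const_mul _)) (hd2.fun_sub hd1) hD]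
    rw [deriv_const_mul _ (hd1.fun_add hd2), deriv_fun_add hd1 hd2, deriv_fun_sub hd2 hd1]
  rw [hderiv]
  unfold frakA
  field_simp
  ring
end

section
/- (Theorem 5.6(3)) Under the hypotheses of the hyperelliptic u_g-flow with the two branch indices a = 1, 2 and ψ_1 ≠ ψ_2 on U (so that al_{12} is nowhere vanishing), the reciprocal 1/al_{12} satisfies ∂_s^2 (1/al_{12}) + [ 𝔇 − 2 𝔞^2 ] · (1/al_{12}) = 0 on U. -/
open Finset
open Polynomial

lemma my_derivative_finset_prod {ι : Type*} [DecidableEq ι] (s : Finset ι) (f : ι → Polynomial ℂ) :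
    Polynomial.derivative (∏ i ∈ s, f i)
      = ∑ i ∈ s, (∏ j ∈ s.erase i, f j) * Polynomial.derivative (f i) := by
  induction s using Finset.induction_on with
  | empty => simp
  | @insert a s ha ih =>
    rw [Finset.prod_insert ha, derivative_mul, ih, Finset.sum_insert ha,
      Finset.erase_insert ha, Finset.mul_sum]
    rw [mul_comm (Polynomial.derivative (f a)) (∏ j ∈ s, f j)]
    congr 1
    refine Finset.sum_congr rfl fun i hi => ?_
    rw [Finset.erase_insert_of_ne (fun h => ha (by rw [h]; exact hi)),
      Finset.prod_insert (fun h => ha (Finset.mem_of_mem_erase h)), mul_assoc]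

lemma my_sq_dvd {P : Polynomial ℂ} {a : ℂ} (h0 : P.eval a = 0)
    (h1 : P.derivative.eval a = 0) : (X - C a)^2 ∣ P := by
  obtain ⟨Q, rfl⟩ := (dvd_iff_isRoot (p := P) (a := a)).mpr h0
  have hQ : Q.eval a = 0 := by
    simpa [derivative_mul, derivative_X_sub_C] using h1
  obtain ⟨R, rfl⟩ := (dvd_iff_isRoot (p := Q) (a := a)).mpr hQ
  exact ⟨R, by ring⟩

lemma my_antisym {n : ℕ} (G : Fin n → Fin n → ℂ)
    (h : ∀ i k, i ≠ k → G i k + G k i = 0) :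
    ∑ i, ∑ k ∈ Finset.univ.erase i, G i k = 0 := by
  classical
  set G' : Fin n → Fin n → ℂ := fun i k => if i = k then 0 else G i k with hG'
  have h1 : ∀ i, ∑ k ∈ Finset.univ.erase i, G i k = ∑ k, G' i k := by
    intro i
    rw [← Finset.sum_erase_add _ _ (Finset.mem_univ i)]
    simp only [hG', if_pos rfl, add_zero]
    exact (Finset.sum_congr rfl fun k hk => by
      simp [Ne.symm (Finset.ne_of_mem_erase hk)]).symm
  simp only [h1]
  have h2 : ∑ i, ∑ k, G' i k = ∑ i, ∑ k, G' k i := Finset.sum_comm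
  have h3 : ∀ i k, G' k i = - G' i k := by
    intro i k
    by_cases hik : i = k
    · simp [hG', hik]
    · simp only [hG', if_neg hik, if_neg (Ne.symm hik)]
      have := h i k hik
      linear_combination this
  have h4 : ∑ i, ∑ k, G' i k = - ∑ i, ∑ k, G' i k := by
    nth_rewrite 1 [h2]
    rw [← Finset.sum_neg_distrib]
    refine Finset.sum_congr rfl fun i _ => ?_
    rw [← Finset.sum_neg_distrib]
    exact Finset.sum_congr rfl fun k _ => h3 i k
  exact add_self_eq_zero.mp (by linear_combination h4)

lemma my_res_core (m : ℕ) (x : Fin (m+1) → ℂ) (hx : Function.Injective x)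
    (q : Polynomial ℂ) (hq : q.natDegree ≤ 2*m+1) :
    ∑ i, (q.derivative.eval (x i) * (∏ j ∈ Finset.univ.erase i, (x i - x j))
        - q.eval (x i) * (2 * ∑ k ∈ Finset.univ.erase i,
            ∏ j ∈ (Finset.univ.erase i).erase k, (x i - x j)))
        / (∏ j ∈ Finset.univ.erase i, (x i - x j))^3
      = q.coeff (2*m+1) := by
  classical
  set d : Fin (m+1) → ℂ := fun i => ∏ j ∈ Finset.univ.erase i, (x i - x j) with hd
  have hdne : ∀ i, d i ≠ 0 := by
    intro i
    refine Finset.prod_ne_zero_iff.mpr fun j hj => sub_ne_zero.mpr ?_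
    exact fun h => (Finset.ne_of_mem_erase hj) (hx h.symm)
  set e0 : Fin (m+1) → ℂ := fun i => ∑ k ∈ Finset.univ.erase i,
      ∏ j ∈ (Finset.univ.erase i).erase k, (x i - x j) with he0
  set N : Fin (m+1) → Polynomial ℂ := fun i => ∏ j ∈ Finset.univ.erase i, (X - C (x j)) with hN
  have hNeval : ∀ i, (N i).eval (x i) = d i := by
    intro i; simp [hN, hd, eval_prod]
  have hNmonic : ∀ i, (N i).Monic := fun i => monic_prod_of_monic _ _ fun j _ => monic_X_sub_C _
  have hNdeg : ∀ i, (N i).natDegree = m := by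
    intro i
    rw [hN]
    rw [natDegree_prod_of_monic _ _ fun j _ => monic_X_sub_C _]
    simp [Finset.card_erase_of_mem]
  have hNeval' : ∀ i, (N i).derivative.eval (x i) = e0 i := by
    intro i
    rw [hN, my_derivative_finset_prod]
    simp [eval_finset_sum, eval_prod, derivative_X_sub_C, he0]
  have hNz : ∀ i j, i ≠ j → (N j).eval (x i) = 0 := by
    intro i j hij
    rw [hN, eval_prod]
    refine Finset.prod_eq_zero (Finset.mem_erase.mpr ⟨hij, Finset.mem_univ i⟩) ?_
    simp
  set A : Fin (m+1) → ℂ := fun i =>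
    (q.derivative.eval (x i) * d i - q.eval (x i) * (2 * e0 i)) / (d i)^3 with hA
  set B : Fin (m+1) → ℂ := fun i => q.eval (x i) / (d i)^2 with hB
  set S : Polynomial ℂ := ∑ i, (C (A i) * (X - C (x i)) + C (B i)) * (N i)^2 with hS
  -- eval of S at x i
  have hM0 : ∀ i j, i ≠ j → ((N j)^2).eval (x i) = 0 := by
    intro i j hij; rw [eval_pow, hNz i j hij]; ring
  have hM1 : ∀ i j, i ≠ j → (Polynomial.derivative ((N j)^2)).eval (x i) = 0 := by
    intro i j hij
    rw [derivative_pow]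
    simp [hNz i j hij]
  have hSeval : ∀ i, S.eval (x i) = B i * (d i)^2 := by
    intro i
    rw [hS, eval_finset_sum]
    rw [Finset.sum_eq_single i]
    · simp [eval_pow, hNeval]
    · intro j _ hji
      rw [eval_mul, hM0 i j (Ne.symm hji), mul_zero]
    · simp
  have hSderiv : ∀ i, S.derivative.eval (x i) = A i * (d i)^2 + B i * (2 * d i * e0 i) := by
    intro i
    rw [hS, derivative_sum]
    rw [eval_finset_sum, Finset.sum_eq_single i]
    · rw [derivative_mul, eval_add, eval_mul, eval_mul]
      have hL : Polynomial.derivative (C (A i) * (X - C (x i)) + C (B i)) = C (A i) := by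
        simp [derivative_mul, derivative_X_sub_C]
      rw [hL]
      rw [derivative_pow]
      simp only [eval_C, eval_add, eval_mul, eval_pow, eval_sub, eval_X, hNeval]
      rw [hNeval']
      push_cast
      ring
    · intro j _ hji
      rw [derivative_mul, eval_add, eval_mul, eval_mul, hM0 i j (Ne.symm hji),
        hM1 i j (Ne.symm hji), mul_zero, mul_zero, add_zero]
    · simp
  -- P := q - S is divisible by all (X - C (x i))^2
  have hPdvd : ∀ i, (X - C (x i))^2 ∣ (q - S) := by
    intro i
    refine my_sq_dvd ?_ ?_
    · rw [eval_sub, hSeval i, hB]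
      field_simp [hdne i]
      ring
    · rw [derivative_sub, eval_sub, hSderiv i, hA, hB]
      field_simp [hdne i]
      ring
  have hF2dvd : (∏ i, (X - C (x i))^2) ∣ (q - S) := by
    refine Finset.prod_dvd_of_coprime ?_ fun i _ => hPdvd i
    intro i _ j _ hij
    exact (Polynomial.pairwise_coprime_X_sub_C hx hij).pow
  have hF2monic : (∏ i : Fin (m+1), (X - C (x i))^2).Monic :=
    monic_prod_of_monic _ _ fun i _ => (monic_X_sub_C _).pow _
  have hF2deg : (∏ i : Fin (m+1), (X - C (x i))^2).natDegree = 2*m+2 := by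
    rw [natDegree_prod_of_monic _ _ fun i _ => (monic_X_sub_C _).pow _]
    simp [natDegree_pow]
    ring
  have hSdeg : S.natDegree ≤ 2*m+1 := by
    rw [hS]
    refine Polynomial.natDegree_sum_le_of_forall_le _ _ fun i _ => ?_
    refine (natDegree_mul_le).trans ?_
    have h1 : (C (A i) * (X - C (x i)) + C (B i)).natDegree ≤ 1 := by
      refine (natDegree_add_le _ _).trans ?_
      simp only [natDegree_C, max_le_iff]
      constructor
      · exact (natDegree_mul_le).trans (by simp [natDegree_X_sub_C])
      · omega
    have h2 : ((N i)^2).natDegree ≤ 2*m := by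
      rw [natDegree_pow, hNdeg]
    omega
  have hPdeg : (q - S).natDegree ≤ 2*m+1 :=
    (natDegree_sub_le _ _).trans (by omega)
  have hP0 : q - S = 0 := by
    by_contra h
    have := Polynomial.natDegree_le_of_dvd hF2dvd h
    rw [hF2deg] at this
    omega
  have hqS : q = S := by linear_combination (norm := ring_nf) hP0
  -- coefficient extraction
  have hcoeff : S.coeff (2*m+1) = ∑ i, A i := by
    rw [hS, finset_sum_coeff]
    refine Finset.sum_congr rfl fun i _ => ?_
    have hMmon : ((N i)^2).Monic := (hNmonic i).pow _
    have hMdeg : ((N i)^2).natDegree = 2*m := by rw [natDegree_pow, hNdeg]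
    have hexp : (C (A i) * (X - C (x i)) + C (B i)) * (N i)^2
        = C (A i) * (X * (N i)^2) + C (B i - A i * x i) * (N i)^2 := by
      rw [C_sub, C_mul]
      ring
    rw [hexp, coeff_add, coeff_C_mul, coeff_C_mul, coeff_X_mul]
    have h1 : ((N i)^2).coeff (2*m) = 1 := by
      have := hMmon.coeff_natDegree
      rwa [hMdeg] at this
    have h2 : ((N i)^2).coeff (2*m+1) = 0 := by
      refine coeff_eq_zero_of_natDegree_lt ?_
      rw [hMdeg]; omega
    rw [h1, h2, mul_one, mul_zero, add_zero]
  rw [hqS]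
  exact hcoeff.symm
lemma my_res (m : ℕ) (x : Fin (m+1) → ℂ) (hx : Function.Injective x)
    (q : Polynomial ℂ) (hq : q.natDegree ≤ 2*m+2) :
    ∑ i, (q.derivative.eval (x i) * (∏ j ∈ Finset.univ.erase i, (x i - x j))
        - q.eval (x i) * (2 * ∑ k ∈ Finset.univ.erase i,
            ∏ j ∈ (Finset.univ.erase i).erase k, (x i - x j)))
        / (∏ j ∈ Finset.univ.erase i, (x i - x j))^3
      = q.coeff (2*m+1) + 2 * q.coeff (2*m+2) * ∑ i, x i := by
  classical
  set F : Polynomial ℂ := ∏ i, (X - C (x i)) with hF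
  have hFmonic : F.Monic := monic_prod_of_monic _ _ fun i _ => monic_X_sub_C _
  have hFdeg : F.natDegree = m+1 := by
    rw [hF, natDegree_prod_of_monic _ _ fun i _ => monic_X_sub_C _]
    simp
  have hFFmonic : (F * F).Monic := hFmonic.mul hFmonic
  have hFFdeg : (F * F).natDegree = 2*m+2 := by
    rw [hFmonic.natDegree_mul hFmonic, hFdeg]; ring
  have hFnext : F.nextCoeff = -∑ i, x i := by
    rw [hF, prod_X_sub_C_nextCoeff]
  have hFFcoeff1 : (F * F).coeff (2*m+1) = -(2 * ∑ i, x i) := by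
    have h1 : (F * F).nextCoeff = F.nextCoeff + F.nextCoeff := hFmonic.nextCoeff_mul hFmonic
    have h2 : (F * F).nextCoeff = (F * F).coeff ((F*F).natDegree - 1) :=
      nextCoeff_of_natDegree_pos (by rw [hFFdeg]; omega)
    rw [hFFdeg] at h2
    have h3 : 2*m+2-1 = 2*m+1 := by omega
    rw [h3] at h2
    rw [← h2, h1, hFnext]; ring
  have hFFcoeff2 : (F * F).coeff (2*m+2) = 1 := by
    have := hFFmonic.coeff_natDegree
    rwa [hFFdeg] at this
  set c : ℂ := q.coeff (2*m+2) with hc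
  set r : Polynomial ℂ := q - C c * (F * F) with hr
  have hrdeg : r.natDegree ≤ 2*m+1 := by
    rw [Polynomial.natDegree_le_iff_coeff_eq_zero]
    intro k hk
    rw [hr, coeff_sub, coeff_C_mul]
    by_cases hk2 : k = 2*m+2
    · rw [hk2, hFFcoeff2, mul_one, hc]; ring
    · have hq2 : q.coeff k = 0 := coeff_eq_zero_of_natDegree_lt (by omega)
      have hf2 : (F * F).coeff k = 0 := coeff_eq_zero_of_natDegree_lt (by rw [hFFdeg]; omega)
      rw [hq2, hf2]; ring
  have hFz : ∀ i, F.eval (x i) = 0 := by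
    intro i
    rw [hF, eval_prod]
    exact Finset.prod_eq_zero (Finset.mem_univ i) (by simp)
  have hsum : ∀ i : Fin (m+1),
      (r.derivative.eval (x i) * (∏ j ∈ Finset.univ.erase i, (x i - x j))
        - r.eval (x i) * (2 * ∑ k ∈ Finset.univ.erase i,
            ∏ j ∈ (Finset.univ.erase i).erase k, (x i - x j)))
        / (∏ j ∈ Finset.univ.erase i, (x i - x j))^3
      = (q.derivative.eval (x i) * (∏ j ∈ Finset.univ.erase i, (x i - x j))
        - q.eval (x i) * (2 * ∑ k ∈ Finset.univ.erase i,
            ∏ j ∈ (Finset.univ.erase i).erase k, (x i - x j)))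
        / (∏ j ∈ Finset.univ.erase i, (x i - x j))^3 := by
    intro i
    have h1 : r.eval (x i) = q.eval (x i) := by
      rw [hr, eval_sub, eval_mul, eval_mul, hFz i, mul_zero, mul_zero, sub_zero]
    have h2 : r.derivative.eval (x i) = q.derivative.eval (x i) := by
      rw [hr, derivative_sub, derivative_C_mul, derivative_mul]
      simp [hFz i]
    rw [h1, h2]
  have hcore := my_res_core m x hx r hrdeg
  rw [Finset.sum_congr rfl (fun i _ => (hsum i))] at hcore
  rw [hcore]
  rw [hr, coeff_sub, coeff_C_mul, hFFcoeff1]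
  ring
set_option maxHeartbeats 2000000 in
lemma my_alg (m : ℕ) (x y D Dp fp : Fin (m+1) → ℂ) (b : Fin (2*(m+1)+1) → ℂ)
    (a : Fin (2*(m+1)+1))
    (hxd : ∀ i j, i ≠ j → x i ≠ x j)
    (ht : ∀ i, x i ≠ b a)
    (hy2 : ∀ i, (y i)^2 = ∏ j, (x i - b j))
    (hD : ∀ i, D i = ∏ j ∈ Finset.univ.erase i, (x i - x j))
    (hDp : ∀ i, Dp i = ∑ k ∈ Finset.univ.erase i,
        (∏ j ∈ (Finset.univ.erase i).erase k, (x i - x j)) * (2 * y i / D i - 2 * y k / D k))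
    (hfp : ∀ i, fp i = ∑ n, ∏ j ∈ Finset.univ.erase n, (x i - b j)) :
    ∑ i, (fp i / D i * (D i * (x i - b a))
          - y i * (Dp i * (x i - b a) + D i * (2 * y i / D i))) / (D i * (x i - b a))^2
      = -(∑ i, y i / (D i * (x i - b a)))^2 + 2 * ∑ i, x i + b a - ∑ j, b j := by
  classical
  have hinj : Function.Injective x := by
    intro i j h
    by_contra hij
    exact hxd i j hij h
  have hDne : ∀ i, D i ≠ 0 := by
    intro i
    rw [hD]
    refine Finset.prod_ne_zero_iff.mpr fun j hj => sub_ne_zero.mpr ?_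
    exact hxd i j (Ne.symm (Finset.ne_of_mem_erase hj))
  have htne : ∀ i, x i - b a ≠ 0 := fun i => sub_ne_zero.mpr (ht i)
  set q : Polynomial ℂ := ∏ j ∈ Finset.univ.erase a, (X - C (b j)) with hq
  set qe : Fin (m+1) → ℂ := fun i => q.eval (x i) with hqedef
  set qd : Fin (m+1) → ℂ := fun i => q.derivative.eval (x i) with hqddef
  set P : Fin (m+1) → Fin (m+1) → ℂ :=
    fun i k => ∏ j ∈ (Finset.univ.erase i).erase k, (x i - x j) with hPdef
  set e0 : Fin (m+1) → ℂ := fun i => ∑ k ∈ Finset.univ.erase i, P i k with he0def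
  set W : Fin (m+1) → ℂ := fun i => ∑ k ∈ Finset.univ.erase i, (y i * y k / D k) * P i k
    with hWdef
  -- basic facts about q
  have hqmonic : q.Monic := monic_prod_of_monic _ _ fun j _ => monic_X_sub_C _
  have hcard : (Finset.univ.erase a).card = 2*m+2 := by
    rw [Finset.card_erase_of_mem (Finset.mem_univ a)]
    simp only [Finset.card_univ, Fintype.card_fin]
    omega
  have hqdeg : q.natDegree = 2*m+2 := by
    rw [hq, natDegree_prod_of_monic _ _ fun j _ => monic_X_sub_C _]
    simp only [natDegree_X_sub_C]
    rw [Finset.sum_const, smul_eq_mul, mul_one, hcard]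
  have hqe : ∀ i, qe i = ∏ j ∈ Finset.univ.erase a, (x i - b j) := by
    intro i; rw [hqedef]; simp [hq, eval_prod]
  have hqe2 : ∀ i, (x i - b a) * qe i = (y i)^2 := by
    intro i
    rw [hqe, hy2 i]
    exact Finset.mul_prod_erase Finset.univ (fun j => x i - b j) (Finset.mem_univ a)
  have hqp : ∀ i, qd i = ∑ k ∈ Finset.univ.erase a,
      ∏ j ∈ (Finset.univ.erase a).erase k, (x i - b j) := by
    intro i
    rw [hqddef]
    simp only [hq, my_derivative_finset_prod, derivative_X_sub_C, mul_one]
    simp [eval_finset_sum, eval_prod]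
  have hfpq : ∀ i, fp i = qe i + (x i - b a) * qd i := by
    intro i
    rw [hfp, ← Finset.add_sum_erase _ _ (Finset.mem_univ a), ← hqe i, hqp i, Finset.mul_sum]
    congr 1
    refine Finset.sum_congr rfl fun n hn => ?_
    have han : a ∈ Finset.univ.erase n :=
      Finset.mem_erase.mpr ⟨Ne.symm (Finset.ne_of_mem_erase hn), Finset.mem_univ a⟩
    have hcm : (Finset.univ.erase n).erase a = (Finset.univ.erase a).erase n := by
      ext j; simp only [Finset.mem_erase, Finset.mem_univ, and_true]; tauto
    rw [← Finset.mul_prod_erase _ (fun j => x i - b j) han, hcm]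
  -- the derivative of each D, multiplied by y
  have hyDp : ∀ i, y i * Dp i = 2*(x i - b a)* qe i * e0 i / D i - 2 * W i := by
    intro i
    calc y i * Dp i
        = ∑ k ∈ Finset.univ.erase i,
            (2*(y i)^2/D i * P i k - 2*((y i * y k / D k) * P i k)) := by
          rw [hDp, Finset.mul_sum]
          exact Finset.sum_congr rfl fun k _ => by rw [hPdef]; ring
      _ = 2*(y i)^2/D i * e0 i - 2 * W i := by
          rw [Finset.sum_sub_distrib, he0def, hWdef, Finset.mul_sum, Finset.mul_sum]
      _ = 2*(x i - b a)* qe i * e0 i / D i - 2 * W i := by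
          rw [show (y i)^2 = (x i - b a) * qe i from (hqe2 i).symm]
          ring
  -- per-term identity
  have hLi : ∀ i, (fp i / D i * (D i * (x i - b a))
          - y i * (Dp i * (x i - b a) + D i * (2 * y i / D i))) / (D i * (x i - b a))^2
      = (qd i * D i - qe i * (2 * e0 i)) / (D i)^3
        - qe i / ((D i)^2 * (x i - b a)) + 2 * W i / ((D i)^2 * (x i - b a)) := by
    intro i
    have h1 : fp i / D i * (D i * (x i - b a)) = fp i * (x i - b a) := by
      field_simp [hDne i]
    have h2 : y i * (Dp i * (x i - b a) + D i * (2 * y i / D i))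
        = (y i * Dp i) * (x i - b a) + 2*(y i)^2 := by
      field_simp [hDne i]
    rw [h1, h2, hyDp i, hfpq i, show (y i)^2 = (x i - b a) * qe i from (hqe2 i).symm]
    field_simp [hDne i, htne i]
    ring
  -- the residue computation
  have hres : ∑ i, (qd i * D i - qe i * (2 * e0 i)) / (D i)^3
      = (b a - ∑ j, b j) + 2 * ∑ i, x i := by
    have hr := my_res m x hinj q (le_of_eq hqdeg)
    have hcv : ∀ i : Fin (m+1),
        (q.derivative.eval (x i) * (∏ j ∈ Finset.univ.erase i, (x i - x j))
        - q.eval (x i) * (2 * ∑ k ∈ Finset.univ.erase i,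
            ∏ j ∈ (Finset.univ.erase i).erase k, (x i - x j)))
        / (∏ j ∈ Finset.univ.erase i, (x i - x j))^3
        = (qd i * D i - qe i * (2 * e0 i)) / (D i)^3 := by
      intro i
      rw [← hD i]
    rw [Finset.sum_congr rfl fun i _ => hcv i] at hr
    rw [hr]
    have hc2 : q.coeff (2*m+2) = 1 := by
      have := hqmonic.coeff_natDegree
      rwa [hqdeg] at this
    have hc1 : q.coeff (2*m+1) = - ∑ j ∈ Finset.univ.erase a, b j := by
      have h2 : q.nextCoeff = q.coeff (q.natDegree - 1) :=
        nextCoeff_of_natDegree_pos (by rw [hqdeg]; omega)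
      rw [hqdeg] at h2
      have h3 : 2*m+2-1 = 2*m+1 := by omega
      rw [h3] at h2
      rw [← h2, hq, prod_X_sub_C_nextCoeff]
    rw [hc1, hc2]
    have h4 : ∑ j, b j = b a + ∑ j ∈ Finset.univ.erase a, b j :=
      (Finset.add_sum_erase _ _ (Finset.mem_univ a)).symm
    rw [h4]
    ring
  -- square of psi
  have hpsisq : (∑ i, y i / (D i * (x i - b a)))^2
      = ∑ i, qe i / ((D i)^2 * (x i - b a))
        + ∑ i, ∑ k ∈ Finset.univ.erase i,
            (y i / (D i * (x i - b a))) * (y k / (D k * (x k - b a))) := by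
    rw [sq, Finset.sum_mul_sum]
    have hdiag : ∀ i : Fin (m+1), ∑ k, (y i / (D i * (x i - b a))) * (y k / (D k * (x k - b a)))
        = (y i / (D i * (x i - b a))) * (y i / (D i * (x i - b a)))
          + ∑ k ∈ Finset.univ.erase i,
            (y i / (D i * (x i - b a))) * (y k / (D k * (x k - b a))) := by
      intro i
      rw [← Finset.add_sum_erase _ _ (Finset.mem_univ i)]
    rw [Finset.sum_congr rfl fun i _ => hdiag i, Finset.sum_add_distrib]
    congr 1
    refine Finset.sum_congr rfl fun i _ => ?_
    rw [div_mul_div_comm, show y i * y i = (x i - b a) * qe i by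
      have := hqe2 i; linear_combination -this]
    field_simp [hDne i, htne i]
  -- the antisymmetric double sum vanishes
  have hanti : ∑ i, (2 * W i / ((D i)^2 * (x i - b a))
        + ∑ k ∈ Finset.univ.erase i,
            (y i / (D i * (x i - b a))) * (y k / (D k * (x k - b a)))) = 0 := by
    have hWsum : ∀ i, 2 * W i / ((D i)^2 * (x i - b a))
        = ∑ k ∈ Finset.univ.erase i,
            2 * ((y i * y k / D k) * P i k) / ((D i)^2 * (x i - b a)) := by
      intro i
      rw [hWdef, Finset.mul_sum, Finset.sum_div]
    have hcomb : ∀ i, (2 * W i / ((D i)^2 * (x i - b a))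
        + ∑ k ∈ Finset.univ.erase i,
            (y i / (D i * (x i - b a))) * (y k / (D k * (x k - b a))))
        = ∑ k ∈ Finset.univ.erase i,
            (2 * ((y i * y k / D k) * P i k) / ((D i)^2 * (x i - b a))
              + (y i / (D i * (x i - b a))) * (y k / (D k * (x k - b a)))) := by
      intro i
      rw [hWsum i, ← Finset.sum_add_distrib]
    rw [Finset.sum_congr rfl fun i _ => hcomb i]
    refine my_antisym _ ?_
    intro i k hik
    have hPik : (x i - x k) * P i k = D i := by
      have hb : P i k = ∏ j ∈ (Finset.univ.erase i).erase k, (x i - x j) := rfl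
      rw [hb, hD]
      exact Finset.mul_prod_erase _ (fun j => x i - x j)
        (Finset.mem_erase.mpr ⟨Ne.symm hik, Finset.mem_univ k⟩)
    have hPki : (x k - x i) * P k i = D k := by
      have hb : P k i = ∏ j ∈ (Finset.univ.erase k).erase i, (x k - x j) := rfl
      rw [hb, hD]
      exact Finset.mul_prod_erase _ (fun j => x k - x j)
        (Finset.mem_erase.mpr ⟨hik, Finset.mem_univ i⟩)
    have hxik : x i - x k ≠ 0 := sub_ne_zero.mpr (hxd i k hik)
    have hxki : x k - x i ≠ 0 := sub_ne_zero.mpr (hxd k i (Ne.symm hik))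
    have hPik' : P i k = D i / (x i - x k) := by
      rw [eq_div_iff hxik]; linear_combination hPik
    have hPki' : P k i = D k / (x k - x i) := by
      rw [eq_div_iff hxki]; linear_combination hPki
    rw [hPik', hPki']
    field_simp [hDne i, hDne k, htne i, htne k]
    ring
  -- final assembly
  rw [Finset.sum_congr rfl fun i _ => hLi i]
  rw [show ∀ (f g h : Fin (m+1) → ℂ), (∑ i, (f i - g i + h i))
      = ∑ i, f i - ∑ i, g i + ∑ i, h i from fun f g h => by
    rw [Finset.sum_add_distrib, Finset.sum_sub_distrib]]
  rw [hres, hpsisq]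
  have := hanti
  rw [Finset.sum_add_distrib] at this
  linear_combination this
set_option maxHeartbeats 1000000

theorem stmt15
    (g : ℕ) (hg : 1 ≤ g)
    (b : Fin (2 * g + 1) → ℂ) (hb : Function.Injective b)
    (U : Set ℂ) (hU : IsOpen U) (hUne : U.Nonempty)
    (x y : Fin g → ℂ → ℂ)
    (hx : ∀ i, DifferentiableOn ℂ (x i) U)
    (hy : ∀ i, DifferentiableOn ℂ (y i) U)
    (hdist : ∀ p ∈ U, ∀ i j, i ≠ j → x i p ≠ x j p)
    (hy2 : ∀ p ∈ U, ∀ i, (y i p) ^ 2 = ∏ j, (x i p - b j))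
    (hyne : ∀ p ∈ U, ∀ i, y i p ≠ 0)
    (hflow : ∀ p ∈ U, ∀ i, deriv (x i) p = 2 * y i p / alFd g x i p)
    (hx1 : ∀ p ∈ U, ∀ i, x i p ≠ b 0)
    (hx2 : ∀ p ∈ U, ∀ i, x i p ≠ b 1)
    (α₁ α₂ : ℂ → ℂ)
    (hα₁ : DifferentiableOn ℂ α₁ U) (hα₂ : DifferentiableOn ℂ α₂ U)
    (hα₁ne : ∀ p ∈ U, α₁ p ≠ 0) (hα₂ne : ∀ p ∈ U, α₂ p ≠ 0)
    (hα₁2 : ∀ p ∈ U, (α₁ p) ^ 2 = ∏ i : Fin g, (x i p - b 0))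
    (hα₂2 : ∀ p ∈ U, (α₂ p) ^ 2 = ∏ i : Fin g, (x i p - b 1))
    (hpsine : ∀ p ∈ U, alPsi g x y (b 0) p ≠ alPsi g x y (b 1) p)
 :
    ∀ p ∈ U,
      deriv (deriv (fun q => 1 / al12 g x y (b 0) (b 1) α₁ α₂ q)) p
        + (frakD g x y (b 0) (b 1) p - 2 * (frakA g x y (b 0) (b 1) p) ^ 2) *
            (1 / al12 g x y (b 0) (b 1) α₁ α₂ p) = 0 := by
  obtain ⟨m, rfl⟩ : ∃ m, g = m + 1 := ⟨g - 1, by omega⟩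
  have hne01 : (0 : Fin (2*(m+1)+1)) ≠ 1 := by
    intro h
    have h2 := congrArg Fin.val h
    rw [Fin.val_zero, Fin.val_one'] at h2
    rw [Nat.mod_eq_of_lt (by omega)] at h2
    exact absurd h2.symm (by omega)
  have hb10 : b 1 - b 0 ≠ 0 := sub_ne_zero.mpr fun h => hne01 (hb h.symm)
  have hDne : ∀ p ∈ U, ∀ i, alFd (m+1) x i p ≠ 0 := by
    intro p hp i
    simp only [alFd]
    exact Finset.prod_ne_zero_iff.mpr fun j hj => sub_ne_zero.mpr
      (hdist p hp i j (Ne.symm (Finset.ne_of_mem_erase hj)))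
  have hxD : ∀ p ∈ U, ∀ i, HasDerivAt (x i) (2 * y i p / alFd (m+1) x i p) p := by
    intro p hp i
    have h2 := (((hx i).differentiableAt (hU.mem_nhds hp))).hasDerivAt
    rwa [hflow p hp i] at h2
  have hDD : ∀ p ∈ U, ∀ i, HasDerivAt (alFd (m+1) x i)
      (∑ k ∈ Finset.univ.erase i, (∏ j ∈ (Finset.univ.erase i).erase k, (x i p - x j p))
        * (2 * y i p / alFd (m+1) x i p - 2 * y k p / alFd (m+1) x k p)) p := by
    intro p hp i
    have h := HasDerivAt.fun_finsetProd (u := Finset.univ.erase i)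
      (f := fun j q => x i q - x j q)
      (f' := fun j => 2 * y i p / alFd (m+1) x i p - 2 * y j p / alFd (m+1) x j p)
      (x := p) (fun j _ => (hxD p hp i).sub (hxD p hp j))
    simp [smul_eq_mul] at h ⊢
    exact h
  have hyD : ∀ p ∈ U, ∀ i, HasDerivAt (y i)
      ((∑ n, ∏ j ∈ Finset.univ.erase n, (x i p - b j)) / alFd (m+1) x i p) p := by
    intro p hp i
    have h2 := (((hy i).differentiableAt (hU.mem_nhds hp))).hasDerivAt
    set w := deriv (y i) p with hw
    have hsq : HasDerivAt (fun q => (y i q)^2) (2 * y i p ^ 1 * w) p := by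
      have := h2.fun_pow 2
      norm_num at this
      rw [pow_one]
      exact this
    have hprod : HasDerivAt (fun q => ∏ j, (x i q - b j))
        (∑ n, (∏ j ∈ Finset.univ.erase n, (x i p - b j)) * (2 * y i p / alFd (m+1) x i p)) p := by
      have h := HasDerivAt.fun_finsetProd (u := Finset.univ)
        (f := fun j q => x i q - b j)
        (f' := fun _ => 2 * y i p / alFd (m+1) x i p)
        (x := p) (fun j _ => (hxD p hp i).sub_const (b j))
      simpa [smul_eq_mul] using h
    have heq : (fun q => (y i q)^2) =ᶠ[nhds p] (fun q => ∏ j, (x i q - b j)) :=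
      Filter.eventuallyEq_of_mem (hU.mem_nhds hp) (fun q hq => hy2 q hq i)
    have hsq2 : HasDerivAt (fun q => ∏ j, (x i q - b j)) (2 * y i p ^ 1 * w) p :=
      hsq.congr_of_eventuallyEq heq.symm
    have huniq := hsq2.unique hprod
    rw [← Finset.sum_mul] at huniq
    have hyp := hyne p hp i
    have hDp := hDne p hp i
    have hwval : w = (∑ n, ∏ j ∈ Finset.univ.erase n, (x i p - b j)) / alFd (m+1) x i p := by
      rw [eq_div_iff hDp]
      have h3 : 2 * y i p ≠ 0 := mul_ne_zero two_ne_zero hyp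
      have h4 : (2 * y i p) * (w * alFd (m+1) x i p)
          = (2 * y i p) * (∑ n, ∏ j ∈ Finset.univ.erase n, (x i p - b j)) := by
        field_simp at huniq
        linear_combination (2 * y i p) * huniq
      exact mul_left_cancel₀ h3 h4
    rw [← hwval]
    exact h2
  have hψD : ∀ (c : Fin (2*(m+1)+1)), (∀ p ∈ U, ∀ i, x i p ≠ b c) → ∀ p ∈ U,
      HasDerivAt (alPsi (m+1) x y (b c))
        (-(∑ i, y i p / (alFd (m+1) x i p * (x i p - b c)))^2
          + 2 * ∑ i, x i p + b c - ∑ j, b j) p := by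
    intro c hc p hp
    have hterm : ∀ i : Fin (m+1), HasDerivAt
        (fun q => y i q / (alFd (m+1) x i q * (x i q - b c)))
        (((∑ n, ∏ j ∈ Finset.univ.erase n, (x i p - b j)) / alFd (m+1) x i p
            * (alFd (m+1) x i p * (x i p - b c))
          - y i p * ((∑ k ∈ Finset.univ.erase i,
              (∏ j ∈ (Finset.univ.erase i).erase k, (x i p - x j p))
                * (2 * y i p / alFd (m+1) x i p - 2 * y k p / alFd (m+1) x k p))
                * (x i p - b c)
              + alFd (m+1) x i p * (2 * y i p / alFd (m+1) x i p)))
          / (alFd (m+1) x i p * (x i p - b c))^2) p := by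
      intro i
      exact (hyD p hp i).div ((hDD p hp i).mul ((hxD p hp i).sub_const (b c)))
        (mul_ne_zero (hDne p hp i) (sub_ne_zero.mpr (hc p hp i)))
    have hsum := HasDerivAt.fun_sum (u := Finset.univ) (fun i _ => hterm i)
    have halg := my_alg m (fun i => x i p) (fun i => y i p)
      (fun i => alFd (m+1) x i p)
      (fun i => ∑ k ∈ Finset.univ.erase i,
          (∏ j ∈ (Finset.univ.erase i).erase k, (x i p - x j p))
            * (2 * y i p / alFd (m+1) x i p - 2 * y k p / alFd (m+1) x k p))
      (fun i => ∑ n, ∏ j ∈ Finset.univ.erase n, (x i p - b j))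
      b c
      (fun i j hij => hdist p hp i j hij)
      (fun i => hc p hp i)
      (fun i => hy2 p hp i)
      (fun i => by simp only [alFd])
      (fun i => rfl)
      (fun i => rfl)
    rw [← halg]
    exact hsum
  have hα1D : ∀ p ∈ U, HasDerivAt α₁ (alPsi (m+1) x y (b 0) p * α₁ p) p := by
    intro p hp
    have h2 := (hα₁.differentiableAt (hU.mem_nhds hp)).hasDerivAt
    set w := deriv α₁ p with hw
    have hsq : HasDerivAt (fun q => (α₁ q)^2) (2 * α₁ p ^ 1 * w) p := by
      have := h2.fun_pow 2
      norm_num at this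
      rw [pow_one]
      exact this
    have hprod : HasDerivAt (fun q => ∏ i, (x i q - b 0))
        (∑ i, (∏ j ∈ Finset.univ.erase i, (x j p - b 0)) * (2 * y i p / alFd (m+1) x i p)) p := by
      have h := HasDerivAt.fun_finsetProd (u := Finset.univ)
        (f := fun i q => x i q - b 0)
        (f' := fun i => 2 * y i p / alFd (m+1) x i p)
        (x := p) (fun i _ => (hxD p hp i).sub_const (b 0))
      simpa [smul_eq_mul] using h
    have heq : (fun q => (α₁ q)^2) =ᶠ[nhds p] (fun q => ∏ i, (x i q - b 0)) :=
      Filter.eventuallyEq_of_mem (hU.mem_nhds hp) (fun q hq => hα₁2 q hq)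
    have hsq2 : HasDerivAt (fun q => ∏ i, (x i q - b 0)) (2 * α₁ p ^ 1 * w) p :=
      hsq.congr_of_eventuallyEq heq.symm
    have huniq := hsq2.unique hprod
    have hkey : ∑ i, (∏ j ∈ Finset.univ.erase i, (x j p - b 0)) * (2 * y i p / alFd (m+1) x i p)
        = 2 * alPsi (m+1) x y (b 0) p * (α₁ p)^2 := by
      rw [hα₁2 p hp]
      simp only [alPsi]
      rw [Finset.mul_sum, Finset.sum_mul]
      refine Finset.sum_congr rfl fun i _ => ?_
      rw [← Finset.mul_prod_erase Finset.univ (fun j => x j p - b 0) (Finset.mem_univ i)]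
      have hD := hDne p hp i
      have ht := sub_ne_zero.mpr (hx1 p hp i)
      field_simp
    have h5 : (2 * α₁ p) * w = (2 * α₁ p) * (alPsi (m+1) x y (b 0) p * α₁ p) := by
      rw [hkey] at huniq
      linear_combination huniq
    have h6 := mul_left_cancel₀ (mul_ne_zero two_ne_zero (hα₁ne p hp)) h5
    rw [← h6]
    exact h2
  have hα2D : ∀ p ∈ U, HasDerivAt α₂ (alPsi (m+1) x y (b 1) p * α₂ p) p := by
    intro p hp
    have h2 := (hα₂.differentiableAt (hU.mem_nhds hp)).hasDerivAt
    set w := deriv α₂ p with hw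
    have hsq : HasDerivAt (fun q => (α₂ q)^2) (2 * α₂ p ^ 1 * w) p := by
      have := h2.fun_pow 2
      norm_num at this
      rw [pow_one]
      exact this
    have hprod : HasDerivAt (fun q => ∏ i, (x i q - b 1))
        (∑ i, (∏ j ∈ Finset.univ.erase i, (x j p - b 1)) * (2 * y i p / alFd (m+1) x i p)) p := by
      have h := HasDerivAt.fun_finsetProd (u := Finset.univ)
        (f := fun i q => x i q - b 1)
        (f' := fun i => 2 * y i p / alFd (m+1) x i p)
        (x := p) (fun i _ => (hxD p hp i).sub_const (b 1))
      simpa [smul_eq_mul] using h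
    have heq : (fun q => (α₂ q)^2) =ᶠ[nhds p] (fun q => ∏ i, (x i q - b 1)) :=
      Filter.eventuallyEq_of_mem (hU.mem_nhds hp) (fun q hq => hα₂2 q hq)
    have hsq2 : HasDerivAt (fun q => ∏ i, (x i q - b 1)) (2 * α₂ p ^ 1 * w) p :=
      hsq.congr_of_eventuallyEq heq.symm
    have huniq := hsq2.unique hprod
    have hkey : ∑ i, (∏ j ∈ Finset.univ.erase i, (x j p - b 1)) * (2 * y i p / alFd (m+1) x i p)
        = 2 * alPsi (m+1) x y (b 1) p * (α₂ p)^2 := by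
      rw [hα₂2 p hp]
      simp only [alPsi]
      rw [Finset.mul_sum, Finset.sum_mul]
      refine Finset.sum_congr rfl fun i _ => ?_
      rw [← Finset.mul_prod_erase Finset.univ (fun j => x j p - b 1) (Finset.mem_univ i)]
      have hD := hDne p hp i
      have ht := sub_ne_zero.mpr (hx2 p hp i)
      field_simp
    have h5 : (2 * α₂ p) * w = (2 * α₂ p) * (alPsi (m+1) x y (b 1) p * α₂ p) := by
      rw [hkey] at huniq
      linear_combination huniq
    have h6 := mul_left_cancel₀ (mul_ne_zero two_ne_zero (hα₂ne p hp)) h5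
    rw [← h6]
    exact h2
  have hχne : ∀ p ∈ U, alPsi (m+1) x y (b 1) p - alPsi (m+1) x y (b 0) p ≠ 0 :=
    fun p hp => sub_ne_zero.mpr (Ne.symm (hpsine p hp))
  have hχD : ∀ p ∈ U, HasDerivAt
      (fun q => alPsi (m+1) x y (b 1) q - alPsi (m+1) x y (b 0) q)
      ((b 1 - b 0) - (alPsi (m+1) x y (b 1) p - alPsi (m+1) x y (b 0) p)
          * (alPsi (m+1) x y (b 0) p + alPsi (m+1) x y (b 1) p)) p := by
    intro p hp
    have h := (hψD 1 hx2 p hp).sub (hψD 0 hx1 p hp)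
    have hv : (-(∑ i, y i p / (alFd (m+1) x i p * (x i p - b 1)))^2
          + 2 * ∑ i, x i p + b 1 - ∑ j, b j)
        - (-(∑ i, y i p / (alFd (m+1) x i p * (x i p - b 0)))^2
          + 2 * ∑ i, x i p + b 0 - ∑ j, b j)
        = (b 1 - b 0) - (alPsi (m+1) x y (b 1) p - alPsi (m+1) x y (b 0) p)
          * (alPsi (m+1) x y (b 0) p + alPsi (m+1) x y (b 1) p) := by
      have e1 : alPsi (m+1) x y (b 1) p = ∑ i, y i p / (alFd (m+1) x i p * (x i p - b 1)) := rfl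
      have e0 : alPsi (m+1) x y (b 0) p = ∑ i, y i p / (alFd (m+1) x i p * (x i p - b 0)) := rfl
      rw [e1, e0]
      ring
    rw [← hv]
    exact h
  have hAD : ∀ p ∈ U, HasDerivAt (fun q => frakA (m+1) x y (b 0) (b 1) q)
      (frakA (m+1) x y (b 0) (b 1) p
          * (alPsi (m+1) x y (b 0) p + alPsi (m+1) x y (b 1) p)
        - (frakA (m+1) x y (b 0) (b 1) p)^2) p := by
    intro p hp
    have h := (hasDerivAt_const p (b 1 - b 0)).div (hχD p hp) (hχne p hp)
    have h3 : (0 * (alPsi (m+1) x y (b 1) p - alPsi (m+1) x y (b 0) p)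
          - (b 1 - b 0) * ((b 1 - b 0) - (alPsi (m+1) x y (b 1) p - alPsi (m+1) x y (b 0) p)
            * (alPsi (m+1) x y (b 0) p + alPsi (m+1) x y (b 1) p)))
          / (alPsi (m+1) x y (b 1) p - alPsi (m+1) x y (b 0) p)^2
        = frakA (m+1) x y (b 0) (b 1) p
            * (alPsi (m+1) x y (b 0) p + alPsi (m+1) x y (b 1) p)
          - (frakA (m+1) x y (b 0) (b 1) p)^2 := by
      simp only [frakA]
      field_simp [hχne p hp]
      ring
    rw [← h3]
    exact h
  have hwEq : ∀ q ∈ U, 1 / al12 (m+1) x y (b 0) (b 1) α₁ α₂ q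
      = frakA (m+1) x y (b 0) (b 1) q / (α₁ q * α₂ q) := by
    intro q hq
    simp only [al12, frakA]
    rw [div_div]
    rw [div_eq_div_iff
      (mul_ne_zero (div_ne_zero (hχne q hq) hb10)
        (mul_ne_zero (hα₁ne q hq) (hα₂ne q hq)))
      (mul_ne_zero (hχne q hq) (mul_ne_zero (hα₁ne q hq) (hα₂ne q hq)))]
    field_simp [hb10]
  have hwD : ∀ p ∈ U, HasDerivAt (fun q => 1 / al12 (m+1) x y (b 0) (b 1) α₁ α₂ q)
      (-(frakA (m+1) x y (b 0) (b 1) p) * (1 / al12 (m+1) x y (b 0) (b 1) α₁ α₂ p)) p := by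
    intro p hp
    have hdiv := (hAD p hp).div ((hα1D p hp).mul (hα2D p hp))
      (mul_ne_zero (hα₁ne p hp) (hα₂ne p hp))
    have heq : (fun q => 1 / al12 (m+1) x y (b 0) (b 1) α₁ α₂ q)
        =ᶠ[nhds p] (fun q => frakA (m+1) x y (b 0) (b 1) q / (α₁ q * α₂ q)) :=
      Filter.eventuallyEq_of_mem (hU.mem_nhds hp) (fun q hq => hwEq q hq)
    have h2 := hdiv.congr_of_eventuallyEq heq
    have h3 : ((frakA (m+1) x y (b 0) (b 1) p
            * (alPsi (m+1) x y (b 0) p + alPsi (m+1) x y (b 1) p)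
          - (frakA (m+1) x y (b 0) (b 1) p)^2) * (α₁ p * α₂ p)
        - frakA (m+1) x y (b 0) (b 1) p
            * (alPsi (m+1) x y (b 0) p * α₁ p * α₂ p
              + α₁ p * (alPsi (m+1) x y (b 1) p * α₂ p))) / (α₁ p * α₂ p)^2
        = -(frakA (m+1) x y (b 0) (b 1) p) * (1 / al12 (m+1) x y (b 0) (b 1) α₁ α₂ p) := by
      rw [hwEq p hp]
      field_simp [hα₁ne p hp, hα₂ne p hp]
      ring
    rw [← h3]
    exact h2
  intro p hp
  have heq2 : deriv (fun q => 1 / al12 (m+1) x y (b 0) (b 1) α₁ α₂ q)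
      =ᶠ[nhds p] (fun q => -(frakA (m+1) x y (b 0) (b 1) q)
        * (1 / al12 (m+1) x y (b 0) (b 1) α₁ α₂ q)) :=
    Filter.eventuallyEq_of_mem (hU.mem_nhds hp) (fun q hq => (hwD q hq).deriv)
  have hsec : deriv (deriv (fun q => 1 / al12 (m+1) x y (b 0) (b 1) α₁ α₂ q)) p
      = deriv (fun q => -(frakA (m+1) x y (b 0) (b 1) q)
        * (1 / al12 (m+1) x y (b 0) (b 1) α₁ α₂ q)) p :=
    heq2.deriv_eq
  have hD2 : HasDerivAt (fun q => -(frakA (m+1) x y (b 0) (b 1) q)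
        * (1 / al12 (m+1) x y (b 0) (b 1) α₁ α₂ q))
      (-(frakA (m+1) x y (b 0) (b 1) p
          * (alPsi (m+1) x y (b 0) p + alPsi (m+1) x y (b 1) p)
        - (frakA (m+1) x y (b 0) (b 1) p)^2)
          * (1 / al12 (m+1) x y (b 0) (b 1) α₁ α₂ p)
        + -(frakA (m+1) x y (b 0) (b 1) p)
          * (-(frakA (m+1) x y (b 0) (b 1) p)
            * (1 / al12 (m+1) x y (b 0) (b 1) α₁ α₂ p))) p :=
    ((hAD p hp).neg).mul (hwD p hp)
  have hDid : frakD (m+1) x y (b 0) (b 1) p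
      = frakA (m+1) x y (b 0) (b 1) p
          * (alPsi (m+1) x y (b 0) p + alPsi (m+1) x y (b 1) p) := by
    simp only [frakD, frakA]
    field_simp [hχne p hp]
  rw [hsec, hD2.deriv, hDid]
  ring
end
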